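/- arXiv:1603.02467 — 4 statements merged into one kernel-verified Lean document; each statement's English description precedes it below -/
import Mathlib

section
/- Let g be a reversible 2-structure satisfying (U1) (every monochromatic digraph G_i(g) is a di-cograph) and (U2) (the triangle condition). Then every substructure of g induced on three vertices has a non-trivial module, i.e., is not prime. -/
/-- A 2-structure is modeled by a labeling `φ : V → V → Υ`; only values on
distinct pairs are relevant. A *module* of the 2-structure. -/
def IsModule {V Υ : Type*} (φ : V → V → Υ) (M : Set V) : Prop :=
  ∀ x ∈ M, ∀ y ∈ M, ∀ z ∉ M, φ x z = φ y z ∧ φ z x = φ z y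

/-- A graph-module of a digraph given by its arc relation `E`. -/
def IsGraphModule {V : Type*} (E : V → V → Prop) (M : Set V) : Prop :=
  ∀ x ∈ M, ∀ y ∈ M, ∀ z ∉ M, (E x z ↔ E y z) ∧ (E z x ↔ E z y)

/-- Two sets overlap: they intersect and neither contains the other. -/
def Overlap {V : Type*} (A B : Set V) : Prop :=
  (A ∩ B).Nonempty ∧ ¬ A ⊆ B ∧ ¬ B ⊆ A

/-- A (nonempty) module of a 2-structure. -/
def IsModuleNe {V Υ : Type*} (φ : V → V → Υ) (M : Set V) : Prop :=
  M.Nonempty ∧ IsModule φ M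

/-- A strong module: a module overlapping no other module. -/
def IsStrongModule {V Υ : Type*} (φ : V → V → Υ) (M : Set V) : Prop :=
  IsModuleNe φ M ∧ ∀ N : Set V, IsModuleNe φ N → ¬ Overlap M N

/-- The labeling of the reversible refinement `rev(g)`. -/
def revMap {V Υ : Type*} (φ : V → V → Υ) : V → V → Υ × Υ :=
  fun x y => (φ x y, φ y x)

/-- A 2-structure is reversible if equally labeled arcs have equally
labeled reverse arcs. -/
def Reversible {V Υ : Type*} (φ : V → V → Υ) : Prop :=
  ∀ x y a b : V, x ≠ y → a ≠ b → φ x y = φ a b → φ y x = φ b a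

/-- The unordered pair of labels on the two arcs between `u` and `v`. -/
def Dset {V Υ : Type*} (φ : V → V → Υ) (u v : V) : Set Υ :=
  {φ u v, φ v u}

/-- The triangle condition (U2). -/
def CondU2 {V Υ : Type*} (φ : V → V → Υ) : Prop :=
  ∀ x y z : V, x ≠ y → x ≠ z → y ≠ z →
    ({Dset φ x y, Dset φ x z, Dset φ y z} : Set (Set Υ)).ncard ≤ 2

/-- The monochromatic digraph `G_i(g)` with arcs labeled `i`. -/
def Ggraph {V Υ : Type*} (φ : V → V → Υ) (i : Υ) : V → V → Prop :=
  fun x y => x ≠ y ∧ φ x y = i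

/-- A relation on `Fin n` given by an explicit arc list. -/
def relOf {n : ℕ} (L : List (Fin n × Fin n)) : Fin n → Fin n → Prop :=
  fun k l => (k, l) ∈ L

/-- Forbidden digraph `D₃`: arcs (0,1),(1,2) only. -/
def FD3 : Fin 3 → Fin 3 → Prop := relOf [(0,1),(1,2)]
/-- Forbidden digraph `A`: an arc into an endpoint of a symmetric edge. -/
def FA : Fin 3 → Fin 3 → Prop := relOf [(0,1),(1,2),(2,1)]
/-- Forbidden digraph `B`: an arc out of an endpoint of a symmetric edge. -/
def FB : Fin 3 → Fin 3 → Prop := relOf [(0,1),(1,0),(1,2)]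
/-- Forbidden digraph `D̄₃`: the complement of `D₃`. -/
def FD3c : Fin 3 → Fin 3 → Prop := relOf [(1,0),(2,1),(0,2),(2,0)]
/-- Forbidden digraph `C₃`: a directed triangle. -/
def FC3 : Fin 3 → Fin 3 → Prop := relOf [(0,1),(1,2),(2,0)]
/-- Forbidden digraph `N`: arcs (1,0),(1,2),(3,2) only. -/
def FN : Fin 4 → Fin 4 → Prop := relOf [(1,0),(1,2),(3,2)]
/-- Forbidden digraph `N̄`: the complement of `N`. -/
def FNc : Fin 4 → Fin 4 → Prop :=
  relOf [(0,1),(2,1),(2,3),(0,2),(2,0),(0,3),(3,0),(1,3),(3,1)]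
/-- Forbidden digraph `P₄`: a symmetric path on four vertices. -/
def FP4 : Fin 4 → Fin 4 → Prop := relOf [(0,1),(1,0),(1,2),(2,1),(2,3),(3,2)]

/-- `E` contains the pattern `K` as an induced subgraph. -/
def HasInducedCopy {V : Type*} (E : V → V → Prop) {n : ℕ}
    (K : Fin n → Fin n → Prop) : Prop :=
  ∃ ι : Fin n → V, Function.Injective ι ∧
    ∀ k l : Fin n, k ≠ l → (E (ι k) (ι l) ↔ K k l)

/-- A di-cograph: a digraph with none of the eight forbidden induced
subgraphs `D₃, A, B, D̄₃, C₃, N̄, N, P₄`. -/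
def IsDiCograph {V : Type*} (E : V → V → Prop) : Prop :=
  ¬ HasInducedCopy E FD3 ∧ ¬ HasInducedCopy E FA ∧ ¬ HasInducedCopy E FB ∧
  ¬ HasInducedCopy E FD3c ∧ ¬ HasInducedCopy E FC3 ∧
  ¬ HasInducedCopy E FNc ∧ ¬ HasInducedCopy E FN ∧ ¬ HasInducedCopy E FP4

/-- Condition (U1): every monochromatic digraph is a di-cograph. -/
def CondU1 {V Υ : Type*} (φ : V → V → Υ) : Prop :=
  ∀ i : Υ, IsDiCograph (Ggraph φ i)

/-- `δ` is a symbolic ultrametric: (U1) and (U2). -/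
def SymbolicUltrametric {V Υ : Type*} (φ : V → V → Υ) : Prop :=
  CondU1 φ ∧ CondU2 φ

/-- A module of the induced substructure `g[X]`. -/
def IsModuleOn {V Υ : Type*} (φ : V → V → Υ) (X M : Set V) : Prop :=
  M ⊆ X ∧ ∀ x ∈ M, ∀ y ∈ M, ∀ z ∈ X \ M, φ x z = φ y z ∧ φ z x = φ z y

/-- The substructure `g[X]` is prime: all its modules are trivial. -/
def IsPrimeOn {V Υ : Type*} (φ : V → V → Υ) (X : Set V) : Prop :=
  ∀ M : Set V, IsModuleOn φ X M → M = ∅ ∨ (∃ v, M = {v}) ∨ M = X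

/-- Uniformly non-prime: no induced substructure on ≥ 3 vertices is prime. -/
def Unp {V Υ : Type*} (φ : V → V → Υ) : Prop :=
  ∀ X : Set V, 3 ≤ X.ncard → ¬ IsPrimeOn φ X

/-- A (nonempty) graph-module of a digraph. -/
def IsGraphModuleNe {V : Type*} (E : V → V → Prop) (M : Set V) : Prop :=
  M.Nonempty ∧ IsGraphModule E M

/-- A strong graph-module of a digraph. -/
def IsStrongGraphModule {V : Type*} (E : V → V → Prop) (M : Set V) : Prop :=
  IsGraphModuleNe E M ∧ ∀ N : Set V, IsGraphModuleNe E N → ¬ Overlap M N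

/-- The subgraph induced on `M` is (weakly) connected. -/
def ConnectedOn {V : Type*} (E : V → V → Prop) (M : Set V) : Prop :=
  ∀ x ∈ M, ∀ y ∈ M,
    Relation.ReflTransGen (fun a b => a ∈ M ∧ b ∈ M ∧ (E a b ∨ E b a)) x y

/-- `M` is a 1-cluster of (the cotree of) the di-cograph `E`: a strong module
with at least two vertices whose cotree vertex is series or order, i.e. whose
induced subgraph is weakly connected. -/
def IsOneCluster {V : Type*} (E : V → V → Prop) (M : Set V) : Prop :=
  IsStrongGraphModule E M ∧ 2 ≤ M.ncard ∧ ConnectedOn E M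

/-- `C¹(g)`: all 1-clusters of the monochromatic di-cographs together with
all singletons. -/
def OneClusters {V Υ : Type*} (φ : V → V → Υ) : Set (Set V) :=
  {M | (∃ i : Υ, IsOneCluster (Ggraph φ i) M) ∨ ∃ v : V, M = {v}}

/-- `M` is the least common ancestor module of `x` and `y`: the minimal strong
module of `g` containing both. -/
def IsLcaModule {V Υ : Type*} (φ : V → V → Υ) (x y : V) (M : Set V) : Prop :=
  IsStrongModule φ M ∧ x ∈ M ∧ y ∈ M ∧
    ∀ N : Set V, IsStrongModule φ N → x ∈ N → y ∈ N → M ⊆ N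


lemma moduleOf {V Υ : Type*} (φ : V → V → Υ) (hrev : Reversible φ)
    (x y z : V) (hxy : x ≠ y) (hxz : x ≠ z) (hyz : y ≠ z)
    (h : φ x y = φ x z) : IsModuleOn φ ({x, y, z} : Set V) {y, z} := by
  have h' : φ y x = φ z x := hrev x y x z hxy hxz h
  constructor
  · intro w hw; rcases hw with rfl | rfl
    · right; left; rfl
    · right; right; rfl
  · intro p hp q hq w hw
    have hwx : w = x := by
      rcases hw with ⟨hw1, hw2⟩
      rcases hw1 with rfl | rfl | rfl
      · rfl
      · exact absurd (Or.inl rfl) hw2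
      · exact absurd (Or.inr rfl) hw2
    subst hwx
    rcases hp with rfl | rfl <;> rcases hq with rfl | rfl <;>
      simp_all <;> first | exact h'.symm | exact h.symm

lemma keyContra {V Υ : Type*} (φ : V → V → Υ) (hU1 : CondU1 φ)
    (a b c : V) (hab : a ≠ b) (hac : a ≠ c) (hbc : b ≠ c)
    (h1 : φ a b ≠ φ a c) (h3 : φ c a ≠ φ c b)
    (hD : Dset φ a b = Dset φ a c) : False := by
  have hmem1 : φ a b ∈ Dset φ a c := by rw [← hD]; left; rfl
  have hmem2 : φ a c ∈ Dset φ a b := by rw [hD]; left; rfl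
  have hca : φ c a = φ a b := by
    rcases hmem1 with h | h
    · exact absurd h h1
    · exact h.symm
  have hba : φ b a = φ a c := by
    rcases hmem2 with h | h
    · exact absurd h.symm h1
    · exact h.symm
  have hij : φ a c ≠ φ a b := fun h => h1 h.symm
  by_cases hcb : φ c b = φ a b
  · exact h3 (by rw [hca, hcb])
  by_cases hbc' : φ b c = φ a b
  · -- directed triangle C₃ in G_{φ a b} on a → b → c → a
    apply (hU1 (φ a b)).2.2.2.2.1
    refine ⟨![a, b, c], ?_, ?_⟩
    · intro k l h
      fin_cases k <;> fin_cases l <;> simp_all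
    · intro k l hkl
      fin_cases k <;> fin_cases l <;>
        simp_all [Ggraph, FC3, relOf, hab, hac, hbc, hbc.symm, hac.symm,
          hab.symm] <;>
        first
          | exact hbc'
          | exact hca
          | exact fun h => hij (hba ▸ h)
          | exact fun h => hij (h ▸ hba.symm)
  · -- D₃ in G_{φ a b}: arcs c → a, a → b only
    apply (hU1 (φ a b)).1
    refine ⟨![c, a, b], ?_, ?_⟩
    · intro k l h
      fin_cases k <;> fin_cases l <;> simp_all
    · intro k l hkl
      fin_cases k <;> fin_cases l <;>
        simp_all [Ggraph, FD3, relOf, hab, hac, hbc, hbc.symm, hac.symm,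
          hab.symm] <;>
        first
          | exact hca
          | exact hbc'
          | exact hcb
          | exact fun h => hij (hba ▸ h)
          | exact fun h => hij (h ▸ hba.symm)

lemma insert_comm3 {V : Type*} (a b c : V) :
    ({b, a, c} : Set V) = {a, b, c} := by
  ext x; simp [Set.mem_insert_iff]; tauto

lemma insert_rot3 {V : Type*} (a b c : V) :
    ({c, a, b} : Set V) = {a, b, c} := by
  ext x; simp [Set.mem_insert_iff]; tauto

/-- For a reversible 2-structure satisfying (U1) and (U2), every induced
substructure on three vertices is non-prime: it has a module of size two. -/
theorem three_vertex_nonprime {V Υ : Type*} (φ : V → V → Υ)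
    (hrev : Reversible φ) (hU1 : CondU1 φ) (hU2 : CondU2 φ) :
    ∀ a b c : V, a ≠ b → a ≠ c → b ≠ c →
      ∃ M : Set V, M ⊆ {a, b, c} ∧ M.ncard = 2 ∧
        IsModuleOn φ ({a, b, c} : Set V) M := by
  intro a b c hab hac hbc
  by_cases h1 : φ a b = φ a c
  · refine ⟨{b, c}, ?_, Set.ncard_pair hbc, moduleOf φ hrev a b c hab hac hbc h1⟩
    intro x hx; rcases hx with rfl | rfl
    · right; left; rfl
    · right; right; rfl
  by_cases h2 : φ b a = φ b c
  · refine ⟨{a, c}, ?_, Set.ncard_pair hac, ?_⟩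
    · intro x hx; rcases hx with rfl | rfl
      · left; rfl
      · right; right; rfl
    · have := moduleOf φ hrev b a c (Ne.symm hab) hbc hac h2
      rwa [insert_comm3 a b c] at this
  by_cases h3 : φ c a = φ c b
  · refine ⟨{a, b}, ?_, Set.ncard_pair hab, ?_⟩
    · intro x hx; rcases hx with rfl | rfl
      · left; rfl
      · right; left; rfl
    · have := moduleOf φ hrev c a b (Ne.symm hac) (Ne.symm hbc) hab h3
      rwa [insert_rot3 a b c] at this
  -- contradiction via (U2) and (U1)
  exfalso
  have hU2' := hU2 a b c hab hac hbc
  have hcases : Dset φ a b = Dset φ a c ∨ Dset φ a b = Dset φ b c ∨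
      Dset φ a c = Dset φ b c := by
    by_contra hcon
    push_neg at hcon
    obtain ⟨e1, e2, e3⟩ := hcon
    have h3card : ({Dset φ a b, Dset φ a c, Dset φ b c} : Set (Set Υ)).ncard = 3 :=
      Set.ncard_eq_three.mpr ⟨_, _, _, e1, e2, e3, rfl⟩
    omega
  rcases hcases with h | h | h
  · exact keyContra φ hU1 a b c hab hac hbc h1 h3 h
  · have h' : Dset φ b a = Dset φ b c := by
      rw [← h]; unfold Dset; exact Set.pair_comm _ _
    exact keyContra φ hU1 b a c (Ne.symm hab) hbc hac h2
      (fun hh => h3 hh.symm) h'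
  · have h' : Dset φ c a = Dset φ c b := by
      unfold Dset; rw [Set.pair_comm (φ c a) (φ a c), Set.pair_comm (φ c b) (φ b c)]
      exact h
    exact keyContra φ hU1 c a b (Ne.symm hac) (Ne.symm hbc) hab h3
      (fun hh => h2 hh.symm) h'
end

section
/- Let g be a reversible 2-structure and suppose g is uniformly non-prime (every induced substructure on 3 or 4 vertices has a non-trivial module). Then for every label i, the digraph G_i(g) contains no induced D_3 (two arcs (a,b),(b,c) present with no arc between a and c in either direction), no induced C_3 (directed 3-cycle with no reverse arcs), no induced P_4 (undirected path on 4 vertices with all arcs symmetric), and no induced N. -/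
/-- Every induced substructure on 3 or 4 vertices has a non-trivial module. -/
def Unp34 {V Υ : Type*} (φ : V → V → Υ) : Prop :=
  ∀ X : Set V, (X.ncard = 3 ∨ X.ncard = 4) →
    ∃ M : Set V, IsModuleOn φ X M ∧ 2 ≤ M.ncard ∧ M ≠ X


theorem key_lemma {V Υ : Type*} (φ : V → V → Υ) (hunp : Unp34 φ) {n : ℕ}
    (hn : n = 3 ∨ n = 4) (K : Fin n → Fin n → Prop)
    (hK : ∀ s : Finset (Fin n), 2 ≤ s.card → s ≠ Finset.univ →
      ∃ x ∈ s, ∃ y ∈ s, ∃ z, z ∉ s ∧ ¬((K x z ↔ K y z) ∧ (K z x ↔ K z y)))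
    (i : Υ) : ¬ HasInducedCopy (Ggraph φ i) K := by
  classical
  rintro ⟨ι, hinj, hiso⟩
  set X : Set V := Set.range ι with hX
  have hXcard : X.ncard = n := by
    rw [hX, ← Set.image_univ, Set.ncard_image_of_injective _ hinj, Set.ncard_univ,
      Nat.card_eq_fintype_card, Fintype.card_fin]
  obtain ⟨M, hM, hMcard, hMne⟩ := hunp X (by rw [hXcard]; exact hn)
  set s : Finset (Fin n) := Finset.univ.filter (fun k => ι k ∈ M) with hs
  have hmem : ∀ k, k ∈ s ↔ ι k ∈ M := by
    intro k; simp [hs]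
  have hMfin : M.Finite := (Set.finite_range ι).subset hM.1
  have hscard : 2 ≤ s.card := by
    obtain ⟨x, hx, y, hy, hxy⟩ := (Set.one_lt_ncard hMfin).mp (by omega)
    obtain ⟨k, rfl⟩ := hM.1 hx
    obtain ⟨l, rfl⟩ := hM.1 hy
    exact Finset.one_lt_card.mpr ⟨k, (hmem k).mpr hx, l, (hmem l).mpr hy,
      fun h => hxy (by rw [h])⟩
  have hsne : s ≠ Finset.univ := by
    intro h
    apply hMne
    refine subset_antisymm hM.1 ?_
    rintro v ⟨k, rfl⟩
    exact (hmem k).mp (h ▸ Finset.mem_univ k)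
  obtain ⟨x, hxs, y, hys, z, hzs, hcon⟩ := hK s hscard hsne
  have hxM : ι x ∈ M := (hmem x).mp hxs
  have hyM : ι y ∈ M := (hmem y).mp hys
  have hzM : ι z ∉ M := fun h => hzs ((hmem z).mpr h)
  obtain ⟨h1, h2⟩ := hM.2 (ι x) hxM (ι y) hyM (ι z) ⟨Set.mem_range_self z, hzM⟩
  have hxz : x ≠ z := fun h => hzM (h ▸ hxM)
  have hyz : y ≠ z := fun h => hzM (h ▸ hyM)
  apply hcon
  constructor
  · rw [← hiso x z hxz, ← hiso y z hyz]
    simp [Ggraph, h1, hinj.ne hxz, hinj.ne hyz]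
  · rw [← hiso z x hxz.symm, ← hiso z y hyz.symm]
    simp [Ggraph, h2, (hinj.ne hxz).symm, (hinj.ne hyz).symm]

set_option synthInstance.maxSize 4000 in
set_option synthInstance.maxHeartbeats 4000000 in
set_option maxHeartbeats 4000000 in
/-- If a reversible 2-structure is uniformly non-prime then no monochromatic
digraph contains an induced `D₃`, `C₃`, `P₄`, or `N`. -/
theorem unp_no_forbidden {V Υ : Type*} (φ : V → V → Υ)
    (hrev : Reversible φ) (hunp : Unp34 φ) :
    ∀ i : Υ, ¬ HasInducedCopy (Ggraph φ i) FD3 ∧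
      ¬ HasInducedCopy (Ggraph φ i) FC3 ∧
      ¬ HasInducedCopy (Ggraph φ i) FP4 ∧
      ¬ HasInducedCopy (Ggraph φ i) FN := by
  intro i
  refine ⟨key_lemma φ hunp (Or.inl rfl) FD3 ?_ i,
    key_lemma φ hunp (Or.inl rfl) FC3 ?_ i,
    key_lemma φ hunp (Or.inr rfl) FP4 ?_ i,
    key_lemma φ hunp (Or.inr rfl) FN ?_ i⟩ <;>
  · simp only [FD3, FC3, FP4, FN, relOf]
    decide
end

section
/- For a reversible 2-structure g = (V, Υ, φ), the associated map δ_g (defined by δ_g(x,y) = φ(x,y)) is a symbolic ultrametric if and only if g is uniformly non-prime. -/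
/-! ### Auxiliary development -/

section Aux
variable {V Υ : Type*}

theorem pairEq {α : Type*} {a b c d : α} (h : ({a,b} : Set α) = {c,d}) :
    (a = c ∧ b = d) ∨ (a = d ∧ b = c) := by
  have ha : a ∈ ({c,d} : Set α) := h ▸ (by simp)
  have hb : b ∈ ({c,d} : Set α) := h ▸ (by simp)
  have hc : c ∈ ({a,b} : Set α) := h.symm ▸ (by simp)
  have hd : d ∈ ({a,b} : Set α) := h.symm ▸ (by simp)
  simp only [Set.mem_insert_iff, Set.mem_singleton_iff] at ha hb hc hd
  rcases ha with h1 | h1 <;> rcases hb with h2 | h2 <;> tauto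

theorem ncard_triple {α : Type*} {a b c : α} (h1 : a ≠ b) (h2 : a ≠ c) (h3 : b ≠ c) :
    ({a,b,c} : Set α).ncard = 3 := by
  rw [Set.ncard_insert_of_notMem (by simp [h1, h2]) (Set.toFinite _),
    Set.ncard_pair h3]

theorem ncard_quad {α : Type*} {a b c d : α} (hab : a ≠ b) (hac : a ≠ c) (had : a ≠ d)
    (hbc : b ≠ c) (hbd : b ≠ d) (hcd : c ≠ d) :
    ({a,b,c,d} : Set α).ncard = 4 := by
  rw [Set.ncard_insert_of_notMem (by simp [hab, hac, had]) (Set.toFinite _),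
    Set.ncard_insert_of_notMem (by simp [hbc, hbd]) (Set.toFinite _),
    Set.ncard_pair hcd]

theorem three_of_ncard_le_two {α : Type*} {a b c : α} (h : ({a,b,c} : Set α).ncard ≤ 2) :
    a = b ∨ a = c ∨ b = c := by
  by_contra hcon
  push_neg at hcon
  have := ncard_triple hcon.1 hcon.2.1 hcon.2.2
  omega

theorem inj3 {a b c : V} (hab : a ≠ b) (hac : a ≠ c) (hbc : b ≠ c) :
    Function.Injective ![a,b,c] := by
  intro k l h
  fin_cases k <;> fin_cases l <;> simp_all

theorem inj4 {a b c d : V} (hab : a ≠ b) (hac : a ≠ c) (had : a ≠ d)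
    (hbc : b ≠ c) (hbd : b ≠ d) (hcd : c ≠ d) :
    Function.Injective ![a,b,c,d] := by
  intro k l h
  fin_cases k <;> fin_cases l <;> simp_all

section copies
variable {E : V → V → Prop}

theorem hasCopy_FD3 {a b c : V} (hab : a ≠ b) (hac : a ≠ c) (hbc : b ≠ c)
    (e01 : E a b) (e12 : E b c)
    (n10 : ¬ E b a) (n02 : ¬ E a c) (n20 : ¬ E c a) (n21 : ¬ E c b) :
    HasInducedCopy E FD3 := by
  refine ⟨![a,b,c], inj3 hab hac hbc, ?_⟩
  intro k l hkl
  fin_cases k <;> fin_cases l <;> simp_all [FD3, relOf]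

theorem hasCopy_FC3 {a b c : V} (hab : a ≠ b) (hac : a ≠ c) (hbc : b ≠ c)
    (e01 : E a b) (e12 : E b c) (e20 : E c a)
    (n10 : ¬ E b a) (n21 : ¬ E c b) (n02 : ¬ E a c) :
    HasInducedCopy E FC3 := by
  refine ⟨![a,b,c], inj3 hab hac hbc, ?_⟩
  intro k l hkl
  fin_cases k <;> fin_cases l <;> simp_all [FC3, relOf]

theorem hasCopy_FN {a b c d : V} (hab : a ≠ b) (hac : a ≠ c) (had : a ≠ d)
    (hbc : b ≠ c) (hbd : b ≠ d) (hcd : c ≠ d)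
    (e10 : E b a) (e12 : E b c) (e32 : E d c)
    (n01 : ¬ E a b) (n02 : ¬ E a c) (n03 : ¬ E a d) (n13 : ¬ E b d)
    (n20 : ¬ E c a) (n21 : ¬ E c b) (n23 : ¬ E c d)
    (n30 : ¬ E d a) (n31 : ¬ E d b) :
    HasInducedCopy E FN := by
  refine ⟨![a,b,c,d], inj4 hab hac had hbc hbd hcd, ?_⟩
  intro k l hkl
  fin_cases k <;> fin_cases l <;> simp_all [FN, relOf]

theorem hasCopy_FP4 {a b c d : V} (hab : a ≠ b) (hac : a ≠ c) (had : a ≠ d)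
    (hbc : b ≠ c) (hbd : b ≠ d) (hcd : c ≠ d)
    (e01 : E a b) (e10 : E b a) (e12 : E b c) (e21 : E c b)
    (e23 : E c d) (e32 : E d c)
    (n02 : ¬ E a c) (n20 : ¬ E c a) (n03 : ¬ E a d) (n30 : ¬ E d a)
    (n13 : ¬ E b d) (n31 : ¬ E d b) :
    HasInducedCopy E FP4 := by
  refine ⟨![a,b,c,d], inj4 hab hac had hbc hbd hcd, ?_⟩
  intro k l hkl
  fin_cases k <;> fin_cases l <;> simp_all [FP4, relOf]

end copies

section patterns
variable {φ : V → V → Υ}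

theorem LD3 (hU1 : CondU1 φ) {a b c : V} {i : Υ}
    (hab : a ≠ b) (hac : a ≠ c) (hbc : b ≠ c)
    (e1 : φ a b = i) (e2 : φ b c = i)
    (n1 : φ b a ≠ i) (n2 : φ a c ≠ i) (n3 : φ c a ≠ i) (n4 : φ c b ≠ i) :
    False :=
  (hU1 i).1 (hasCopy_FD3 hab hac hbc ⟨hab, e1⟩ ⟨hbc, e2⟩
    (fun h => n1 h.2) (fun h => n2 h.2) (fun h => n3 h.2) (fun h => n4 h.2))

theorem LC3 (hU1 : CondU1 φ) {a b c : V} {i : Υ}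
    (hab : a ≠ b) (hac : a ≠ c) (hbc : b ≠ c)
    (e1 : φ a b = i) (e2 : φ b c = i) (e3 : φ c a = i)
    (n1 : φ b a ≠ i) (n2 : φ c b ≠ i) (n3 : φ a c ≠ i) :
    False :=
  (hU1 i).2.2.2.2.1 (hasCopy_FC3 hab hac hbc ⟨hab, e1⟩ ⟨hbc, e2⟩ ⟨hac.symm, e3⟩
    (fun h => n1 h.2) (fun h => n2 h.2) (fun h => n3 h.2))

theorem LN (hU1 : CondU1 φ) {a b c d : V} {i : Υ}
    (hab : a ≠ b) (hac : a ≠ c) (had : a ≠ d)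
    (hbc : b ≠ c) (hbd : b ≠ d) (hcd : c ≠ d)
    (e10 : φ b a = i) (e12 : φ b c = i) (e32 : φ d c = i)
    (n01 : φ a b ≠ i) (n02 : φ a c ≠ i) (n03 : φ a d ≠ i) (n13 : φ b d ≠ i)
    (n20 : φ c a ≠ i) (n21 : φ c b ≠ i) (n23 : φ c d ≠ i)
    (n30 : φ d a ≠ i) (n31 : φ d b ≠ i) :
    False :=
  (hU1 i).2.2.2.2.2.2.1 (hasCopy_FN hab hac had hbc hbd hcd
    ⟨hab.symm, e10⟩ ⟨hbc, e12⟩ ⟨hcd.symm, e32⟩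
    (fun h => n01 h.2) (fun h => n02 h.2) (fun h => n03 h.2) (fun h => n13 h.2)
    (fun h => n20 h.2) (fun h => n21 h.2) (fun h => n23 h.2)
    (fun h => n30 h.2) (fun h => n31 h.2))

theorem LP4 (hU1 : CondU1 φ) {a b c d : V} {i : Υ}
    (hab : a ≠ b) (hac : a ≠ c) (had : a ≠ d)
    (hbc : b ≠ c) (hbd : b ≠ d) (hcd : c ≠ d)
    (e01 : φ a b = i) (e10 : φ b a = i) (e12 : φ b c = i) (e21 : φ c b = i)
    (e23 : φ c d = i) (e32 : φ d c = i)
    (n02 : φ a c ≠ i) (n20 : φ c a ≠ i) (n03 : φ a d ≠ i) (n30 : φ d a ≠ i)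
    (n13 : φ b d ≠ i) (n31 : φ d b ≠ i) :
    False :=
  (hU1 i).2.2.2.2.2.2.2 (hasCopy_FP4 hab hac had hbc hbd hcd
    ⟨hab, e01⟩ ⟨hab.symm, e10⟩ ⟨hbc, e12⟩ ⟨hbc.symm, e21⟩ ⟨hcd, e23⟩ ⟨hcd.symm, e32⟩
    (fun h => n02 h.2) (fun h => n20 h.2) (fun h => n03 h.2) (fun h => n30 h.2)
    (fun h => n13 h.2) (fun h => n31 h.2))

end patterns

section primes
variable {φ : V → V → Υ}

theorem prime3 {a b c : V} (hab : a ≠ b) (hac : a ≠ c) (hbc : b ≠ c)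
    (p1 : φ a c ≠ φ b c ∨ φ c a ≠ φ c b)
    (p2 : φ a b ≠ φ c b ∨ φ b a ≠ φ b c)
    (p3 : φ b a ≠ φ c a ∨ φ a b ≠ φ a c) :
    IsPrimeOn φ ({a,b,c} : Set V) := by
  rintro M ⟨hMX, hmod⟩
  by_cases ha : a ∈ M <;> by_cases hb : b ∈ M <;> by_cases hc : c ∈ M
  · right; right
    refine subset_antisymm hMX ?_
    intro y hy
    rcases hy with rfl | rfl | rfl <;> assumption
  · exfalso
    have h1 := hmod a ha b hb c ⟨by simp, hc⟩
    rcases p1 with h | h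
    · exact h h1.1
    · exact h h1.2
  · exfalso
    have h1 := hmod a ha c hc b ⟨by simp, hb⟩
    rcases p2 with h | h
    · exact h h1.1
    · exact h h1.2
  · right; left
    refine ⟨a, subset_antisymm ?_ (by simpa using ha)⟩
    intro y hy
    rcases hMX hy with rfl | rfl | rfl
    · rfl
    · exact absurd hy hb
    · exact absurd hy hc
  · exfalso
    have h1 := hmod b hb c hc a ⟨by simp, ha⟩
    rcases p3 with h | h
    · exact h h1.1
    · exact h h1.2
  · right; left
    refine ⟨b, subset_antisymm ?_ (by simpa using hb)⟩
    intro y hy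
    rcases hMX hy with rfl | rfl | rfl
    · exact absurd hy ha
    · rfl
    · exact absurd hy hc
  · right; left
    refine ⟨c, subset_antisymm ?_ (by simpa using hc)⟩
    intro y hy
    rcases hMX hy with rfl | rfl | rfl
    · exact absurd hy ha
    · exact absurd hy hb
    · rfl
  · left
    refine subset_antisymm ?_ (Set.empty_subset _)
    intro y hy
    rcases hMX hy with rfl | rfl | rfl
    · exact absurd hy ha
    · exact absurd hy hb
    · exact absurd hy hc

theorem prime4 {a b c d : V} (hab : a ≠ b) (hac : a ≠ c) (had : a ≠ d)
    (hbc : b ≠ c) (hbd : b ≠ d) (hcd : c ≠ d)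
    (pab : φ a c ≠ φ b c ∨ φ c a ≠ φ c b ∨ φ a d ≠ φ b d ∨ φ d a ≠ φ d b)
    (pac : φ a b ≠ φ c b ∨ φ b a ≠ φ b c ∨ φ a d ≠ φ c d ∨ φ d a ≠ φ d c)
    (pad : φ a b ≠ φ d b ∨ φ b a ≠ φ b d ∨ φ a c ≠ φ d c ∨ φ c a ≠ φ c d)
    (pbc : φ b a ≠ φ c a ∨ φ a b ≠ φ a c ∨ φ b d ≠ φ c d ∨ φ d b ≠ φ d c)
    (pbd : φ b a ≠ φ d a ∨ φ a b ≠ φ a d ∨ φ b c ≠ φ d c ∨ φ c b ≠ φ c d)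
    (pcd : φ c a ≠ φ d a ∨ φ a c ≠ φ a d ∨ φ c b ≠ φ d b ∨ φ b c ≠ φ b d)
    (tabc : φ a d ≠ φ b d ∨ φ b d ≠ φ c d ∨ φ d a ≠ φ d b ∨ φ d b ≠ φ d c)
    (tabd : φ a c ≠ φ b c ∨ φ b c ≠ φ d c ∨ φ c a ≠ φ c b ∨ φ c b ≠ φ c d)
    (tacd : φ a b ≠ φ c b ∨ φ c b ≠ φ d b ∨ φ b a ≠ φ b c ∨ φ b c ≠ φ b d)
    (tbcd : φ b a ≠ φ c a ∨ φ c a ≠ φ d a ∨ φ a b ≠ φ a c ∨ φ a c ≠ φ a d) :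
    IsPrimeOn φ ({a,b,c,d} : Set V) := by
  rintro M ⟨hMX, hmod⟩
  by_cases ha : a ∈ M <;> by_cases hb : b ∈ M <;> by_cases hc : c ∈ M <;>
    by_cases hd : d ∈ M
  · right; right
    refine subset_antisymm hMX ?_
    intro y hy
    rcases hy with rfl | rfl | rfl | rfl <;> assumption
  · exfalso
    have h1 := hmod a ha b hb d ⟨by simp, hd⟩
    have h2 := hmod b hb c hc d ⟨by simp, hd⟩
    rcases tabc with h | h | h | h
    · exact h h1.1
    · exact h h2.1
    · exact h h1.2
    · exact h h2.2
  · exfalso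
    have h1 := hmod a ha b hb c ⟨by simp, hc⟩
    have h2 := hmod b hb d hd c ⟨by simp, hc⟩
    rcases tabd with h | h | h | h
    · exact h h1.1
    · exact h h2.1
    · exact h h1.2
    · exact h h2.2
  · exfalso
    have h1 := hmod a ha b hb c ⟨by simp, hc⟩
    have h2 := hmod a ha b hb d ⟨by simp, hd⟩
    rcases pab with h | h | h | h
    · exact h h1.1
    · exact h h1.2
    · exact h h2.1
    · exact h h2.2
  · exfalso
    have h1 := hmod a ha c hc b ⟨by simp, hb⟩
    have h2 := hmod c hc d hd b ⟨by simp, hb⟩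
    rcases tacd with h | h | h | h
    · exact h h1.1
    · exact h h2.1
    · exact h h1.2
    · exact h h2.2
  · exfalso
    have h1 := hmod a ha c hc b ⟨by simp, hb⟩
    have h2 := hmod a ha c hc d ⟨by simp, hd⟩
    rcases pac with h | h | h | h
    · exact h h1.1
    · exact h h1.2
    · exact h h2.1
    · exact h h2.2
  · exfalso
    have h1 := hmod a ha d hd b ⟨by simp, hb⟩
    have h2 := hmod a ha d hd c ⟨by simp, hc⟩
    rcases pad with h | h | h | h
    · exact h h1.1
    · exact h h1.2
    · exact h h2.1
    · exact h h2.2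
  · right; left
    refine ⟨a, subset_antisymm ?_ (by simpa using ha)⟩
    intro y hy
    rcases hMX hy with rfl | rfl | rfl | rfl
    · rfl
    · exact absurd hy hb
    · exact absurd hy hc
    · exact absurd hy hd
  · exfalso
    have h1 := hmod b hb c hc a ⟨by simp, ha⟩
    have h2 := hmod c hc d hd a ⟨by simp, ha⟩
    rcases tbcd with h | h | h | h
    · exact h h1.1
    · exact h h2.1
    · exact h h1.2
    · exact h h2.2
  · exfalso
    have h1 := hmod b hb c hc a ⟨by simp, ha⟩
    have h2 := hmod b hb c hc d ⟨by simp, hd⟩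
    rcases pbc with h | h | h | h
    · exact h h1.1
    · exact h h1.2
    · exact h h2.1
    · exact h h2.2
  · exfalso
    have h1 := hmod b hb d hd a ⟨by simp, ha⟩
    have h2 := hmod b hb d hd c ⟨by simp, hc⟩
    rcases pbd with h | h | h | h
    · exact h h1.1
    · exact h h1.2
    · exact h h2.1
    · exact h h2.2
  · right; left
    refine ⟨b, subset_antisymm ?_ (by simpa using hb)⟩
    intro y hy
    rcases hMX hy with rfl | rfl | rfl | rfl
    · exact absurd hy ha
    · rfl
    · exact absurd hy hc
    · exact absurd hy hd
  · exfalso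
    have h1 := hmod c hc d hd a ⟨by simp, ha⟩
    have h2 := hmod c hc d hd b ⟨by simp, hb⟩
    rcases pcd with h | h | h | h
    · exact h h1.1
    · exact h h1.2
    · exact h h2.1
    · exact h h2.2
  · right; left
    refine ⟨c, subset_antisymm ?_ (by simpa using hc)⟩
    intro y hy
    rcases hMX hy with rfl | rfl | rfl | rfl
    · exact absurd hy ha
    · exact absurd hy hb
    · rfl
    · exact absurd hy hd
  · right; left
    refine ⟨d, subset_antisymm ?_ (by simpa using hd)⟩
    intro y hy
    rcases hMX hy with rfl | rfl | rfl | rfl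
    · exact absurd hy ha
    · exact absurd hy hb
    · exact absurd hy hc
    · rfl
  · left
    refine subset_antisymm ?_ (Set.empty_subset _)
    intro y hy
    rcases hMX hy with rfl | rfl | rfl | rfl
    · exact absurd hy ha
    · exact absurd hy hb
    · exact absurd hy hc
    · exact absurd hy hd

end primes

section dirB
variable {φ : V → V → Υ}

theorem lne1 {α : Type*} {x y i : α} (ex : x = i) (ny : y ≠ i) : x ≠ y :=
  fun h => ny (h.symm.trans ex)

theorem lne2 {α : Type*} {x y i : α} (nx : x ≠ i) (ey : y = i) : x ≠ y :=
  fun h => nx (h.trans ey)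

theorem ncard_le_two_of_eq {α : Type*} {a b c : α} (h : a = b ∨ a = c ∨ b = c) :
    ({a,b,c} : Set α).ncard ≤ 2 := by
  have hsub : ({a,b,c} : Set α) ⊆ {a, c} ∨ ({a,b,c} : Set α) ⊆ {a, b} := by
    rcases h with rfl | rfl | rfl
    · left; intro y hy; rcases hy with rfl | rfl | rfl <;> simp
    · right; intro y hy; rcases hy with rfl | rfl | rfl <;> simp
    · right; intro y hy; rcases hy with rfl | rfl | rfl <;> simp
  rcases hsub with h' | h' <;>
    exact (Set.ncard_le_ncard h' (Set.toFinite _)).trans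
      ((Set.ncard_insert_le _ _).trans (by simp))

theorem unp_to_su (hUnp : Unp φ) : SymbolicUltrametric φ := by
  constructor
  · intro i
    have key3 : ∀ (K : Fin 3 → Fin 3 → Prop), HasInducedCopy (Ggraph φ i) K →
        ∀ _ : K 0 1 ∨ K 1 0, True := fun _ _ _ => trivial
    refine ⟨?_, ?_, ?_, ?_, ?_, ?_, ?_, ?_⟩
    -- FD3
    · rintro ⟨ι, hinj, hiff⟩
      have hE : ∀ k l : Fin 3, k ≠ l → FD3 k l → φ (ι k) (ι l) = i :=
        fun k l h hk => ((hiff k l h).mpr hk).2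
      have hN : ∀ k l : Fin 3, k ≠ l → ¬ FD3 k l → φ (ι k) (ι l) ≠ i :=
        fun k l h hk hv => hk ((hiff k l h).mp ⟨hinj.ne h, hv⟩)
      have d01 : ι 0 ≠ ι 1 := hinj.ne (by decide)
      have d02 : ι 0 ≠ ι 2 := hinj.ne (by decide)
      have d12 : ι 1 ≠ ι 2 := hinj.ne (by decide)
      refine hUnp {ι 0, ι 1, ι 2} (le_of_eq (ncard_triple d01 d02 d12).symm)
        (prime3 d01 d02 d12 ?_ ?_ ?_)
      · exact Or.inl (lne2 (hN 0 2 (by decide) (by simp [FD3, FA, FB, FD3c, FC3, FN, FNc, FP4, relOf])) (hE 1 2 (by decide) (by simp [FD3, FA, FB, FD3c, FC3, FN, FNc, FP4, relOf])))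
      · exact Or.inl (lne1 (hE 0 1 (by decide) (by simp [FD3, FA, FB, FD3c, FC3, FN, FNc, FP4, relOf])) (hN 2 1 (by decide) (by simp [FD3, FA, FB, FD3c, FC3, FN, FNc, FP4, relOf])))
      · exact Or.inr (lne1 (hE 0 1 (by decide) (by simp [FD3, FA, FB, FD3c, FC3, FN, FNc, FP4, relOf])) (hN 0 2 (by decide) (by simp [FD3, FA, FB, FD3c, FC3, FN, FNc, FP4, relOf])))
    -- FA
    · rintro ⟨ι, hinj, hiff⟩
      have hE : ∀ k l : Fin 3, k ≠ l → FA k l → φ (ι k) (ι l) = i :=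
        fun k l h hk => ((hiff k l h).mpr hk).2
      have hN : ∀ k l : Fin 3, k ≠ l → ¬ FA k l → φ (ι k) (ι l) ≠ i :=
        fun k l h hk hv => hk ((hiff k l h).mp ⟨hinj.ne h, hv⟩)
      have d01 : ι 0 ≠ ι 1 := hinj.ne (by decide)
      have d02 : ι 0 ≠ ι 2 := hinj.ne (by decide)
      have d12 : ι 1 ≠ ι 2 := hinj.ne (by decide)
      refine hUnp {ι 0, ι 1, ι 2} (le_of_eq (ncard_triple d01 d02 d12).symm)
        (prime3 d01 d02 d12 ?_ ?_ ?_)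
      · exact Or.inl (lne2 (hN 0 2 (by decide) (by simp [FD3, FA, FB, FD3c, FC3, FN, FNc, FP4, relOf])) (hE 1 2 (by decide) (by simp [FD3, FA, FB, FD3c, FC3, FN, FNc, FP4, relOf])))
      · exact Or.inr (lne2 (hN 1 0 (by decide) (by simp [FD3, FA, FB, FD3c, FC3, FN, FNc, FP4, relOf])) (hE 1 2 (by decide) (by simp [FD3, FA, FB, FD3c, FC3, FN, FNc, FP4, relOf])))
      · exact Or.inr (lne1 (hE 0 1 (by decide) (by simp [FD3, FA, FB, FD3c, FC3, FN, FNc, FP4, relOf])) (hN 0 2 (by decide) (by simp [FD3, FA, FB, FD3c, FC3, FN, FNc, FP4, relOf])))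
    -- FB
    · rintro ⟨ι, hinj, hiff⟩
      have hE : ∀ k l : Fin 3, k ≠ l → FB k l → φ (ι k) (ι l) = i :=
        fun k l h hk => ((hiff k l h).mpr hk).2
      have hN : ∀ k l : Fin 3, k ≠ l → ¬ FB k l → φ (ι k) (ι l) ≠ i :=
        fun k l h hk hv => hk ((hiff k l h).mp ⟨hinj.ne h, hv⟩)
      have d01 : ι 0 ≠ ι 1 := hinj.ne (by decide)
      have d02 : ι 0 ≠ ι 2 := hinj.ne (by decide)
      have d12 : ι 1 ≠ ι 2 := hinj.ne (by decide)
      refine hUnp {ι 0, ι 1, ι 2} (le_of_eq (ncard_triple d01 d02 d12).symm)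
        (prime3 d01 d02 d12 ?_ ?_ ?_)
      · exact Or.inl (lne2 (hN 0 2 (by decide) (by simp [FD3, FA, FB, FD3c, FC3, FN, FNc, FP4, relOf])) (hE 1 2 (by decide) (by simp [FD3, FA, FB, FD3c, FC3, FN, FNc, FP4, relOf])))
      · exact Or.inl (lne1 (hE 0 1 (by decide) (by simp [FD3, FA, FB, FD3c, FC3, FN, FNc, FP4, relOf])) (hN 2 1 (by decide) (by simp [FD3, FA, FB, FD3c, FC3, FN, FNc, FP4, relOf])))
      · exact Or.inl (lne1 (hE 1 0 (by decide) (by simp [FD3, FA, FB, FD3c, FC3, FN, FNc, FP4, relOf])) (hN 2 0 (by decide) (by simp [FD3, FA, FB, FD3c, FC3, FN, FNc, FP4, relOf])))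
    -- FD3c
    · rintro ⟨ι, hinj, hiff⟩
      have hE : ∀ k l : Fin 3, k ≠ l → FD3c k l → φ (ι k) (ι l) = i :=
        fun k l h hk => ((hiff k l h).mpr hk).2
      have hN : ∀ k l : Fin 3, k ≠ l → ¬ FD3c k l → φ (ι k) (ι l) ≠ i :=
        fun k l h hk hv => hk ((hiff k l h).mp ⟨hinj.ne h, hv⟩)
      have d01 : ι 0 ≠ ι 1 := hinj.ne (by decide)
      have d02 : ι 0 ≠ ι 2 := hinj.ne (by decide)
      have d12 : ι 1 ≠ ι 2 := hinj.ne (by decide)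
      refine hUnp {ι 0, ι 1, ι 2} (le_of_eq (ncard_triple d01 d02 d12).symm)
        (prime3 d01 d02 d12 ?_ ?_ ?_)
      · exact Or.inl (lne1 (hE 0 2 (by decide) (by simp [FD3, FA, FB, FD3c, FC3, FN, FNc, FP4, relOf])) (hN 1 2 (by decide) (by simp [FD3, FA, FB, FD3c, FC3, FN, FNc, FP4, relOf])))
      · exact Or.inl (lne2 (hN 0 1 (by decide) (by simp [FD3, FA, FB, FD3c, FC3, FN, FNc, FP4, relOf])) (hE 2 1 (by decide) (by simp [FD3, FA, FB, FD3c, FC3, FN, FNc, FP4, relOf])))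
      · exact Or.inr (lne2 (hN 0 1 (by decide) (by simp [FD3, FA, FB, FD3c, FC3, FN, FNc, FP4, relOf])) (hE 0 2 (by decide) (by simp [FD3, FA, FB, FD3c, FC3, FN, FNc, FP4, relOf])))
    -- FC3
    · rintro ⟨ι, hinj, hiff⟩
      have hE : ∀ k l : Fin 3, k ≠ l → FC3 k l → φ (ι k) (ι l) = i :=
        fun k l h hk => ((hiff k l h).mpr hk).2
      have hN : ∀ k l : Fin 3, k ≠ l → ¬ FC3 k l → φ (ι k) (ι l) ≠ i :=
        fun k l h hk hv => hk ((hiff k l h).mp ⟨hinj.ne h, hv⟩)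
      have d01 : ι 0 ≠ ι 1 := hinj.ne (by decide)
      have d02 : ι 0 ≠ ι 2 := hinj.ne (by decide)
      have d12 : ι 1 ≠ ι 2 := hinj.ne (by decide)
      refine hUnp {ι 0, ι 1, ι 2} (le_of_eq (ncard_triple d01 d02 d12).symm)
        (prime3 d01 d02 d12 ?_ ?_ ?_)
      · exact Or.inl (lne2 (hN 0 2 (by decide) (by simp [FD3, FA, FB, FD3c, FC3, FN, FNc, FP4, relOf])) (hE 1 2 (by decide) (by simp [FD3, FA, FB, FD3c, FC3, FN, FNc, FP4, relOf])))
      · exact Or.inl (lne1 (hE 0 1 (by decide) (by simp [FD3, FA, FB, FD3c, FC3, FN, FNc, FP4, relOf])) (hN 2 1 (by decide) (by simp [FD3, FA, FB, FD3c, FC3, FN, FNc, FP4, relOf])))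
      · exact Or.inl (lne2 (hN 1 0 (by decide) (by simp [FD3, FA, FB, FD3c, FC3, FN, FNc, FP4, relOf])) (hE 2 0 (by decide) (by simp [FD3, FA, FB, FD3c, FC3, FN, FNc, FP4, relOf])))
    -- FNc
    · rintro ⟨ι, hinj, hiff⟩
      have hE : ∀ k l : Fin 4, k ≠ l → FNc k l → φ (ι k) (ι l) = i :=
        fun k l h hk => ((hiff k l h).mpr hk).2
      have hN : ∀ k l : Fin 4, k ≠ l → ¬ FNc k l → φ (ι k) (ι l) ≠ i :=
        fun k l h hk hv => hk ((hiff k l h).mp ⟨hinj.ne h, hv⟩)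
      have d01 : ι 0 ≠ ι 1 := hinj.ne (by decide)
      have d02 : ι 0 ≠ ι 2 := hinj.ne (by decide)
      have d03 : ι 0 ≠ ι 3 := hinj.ne (by decide)
      have d12 : ι 1 ≠ ι 2 := hinj.ne (by decide)
      have d13 : ι 1 ≠ ι 3 := hinj.ne (by decide)
      have d23 : ι 2 ≠ ι 3 := hinj.ne (by decide)
      refine hUnp {ι 0, ι 1, ι 2, ι 3} ?_
        (prime4 d01 d02 d03 d12 d13 d23 ?_ ?_ ?_ ?_ ?_ ?_ ?_ ?_ ?_ ?_)
      · rw [ncard_quad d01 d02 d03 d12 d13 d23]; omega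
      · exact Or.inl (lne1 (hE 0 2 (by decide) (by simp [FD3, FA, FB, FD3c, FC3, FN, FNc, FP4, relOf])) (hN 1 2 (by decide) (by simp [FD3, FA, FB, FD3c, FC3, FN, FNc, FP4, relOf])))
      · exact Or.inr (Or.inr (Or.inr (lne1 (hE 3 0 (by decide) (by simp [FD3, FA, FB, FD3c, FC3, FN, FNc, FP4, relOf])) (hN 3 2 (by decide) (by simp [FD3, FA, FB, FD3c, FC3, FN, FNc, FP4, relOf])))))
      · exact Or.inr (Or.inr (Or.inl (lne1 (hE 0 2 (by decide) (by simp [FD3, FA, FB, FD3c, FC3, FN, FNc, FP4, relOf])) (hN 3 2 (by decide) (by simp [FD3, FA, FB, FD3c, FC3, FN, FNc, FP4, relOf])))))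
      · exact Or.inl (lne2 (hN 1 0 (by decide) (by simp [FD3, FA, FB, FD3c, FC3, FN, FNc, FP4, relOf])) (hE 2 0 (by decide) (by simp [FD3, FA, FB, FD3c, FC3, FN, FNc, FP4, relOf])))
      · exact Or.inl (lne2 (hN 1 0 (by decide) (by simp [FD3, FA, FB, FD3c, FC3, FN, FNc, FP4, relOf])) (hE 3 0 (by decide) (by simp [FD3, FA, FB, FD3c, FC3, FN, FNc, FP4, relOf])))
      · exact Or.inr (Or.inr (Or.inr (lne2 (hN 1 2 (by decide) (by simp [FD3, FA, FB, FD3c, FC3, FN, FNc, FP4, relOf])) (hE 1 3 (by decide) (by simp [FD3, FA, FB, FD3c, FC3, FN, FNc, FP4, relOf])))))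
      · exact Or.inr (Or.inr (Or.inr (lne1 (hE 3 1 (by decide) (by simp [FD3, FA, FB, FD3c, FC3, FN, FNc, FP4, relOf])) (hN 3 2 (by decide) (by simp [FD3, FA, FB, FD3c, FC3, FN, FNc, FP4, relOf])))))
      · exact Or.inl (lne1 (hE 0 2 (by decide) (by simp [FD3, FA, FB, FD3c, FC3, FN, FNc, FP4, relOf])) (hN 1 2 (by decide) (by simp [FD3, FA, FB, FD3c, FC3, FN, FNc, FP4, relOf])))
      · exact Or.inr (Or.inr (Or.inr (lne2 (hN 1 2 (by decide) (by simp [FD3, FA, FB, FD3c, FC3, FN, FNc, FP4, relOf])) (hE 1 3 (by decide) (by simp [FD3, FA, FB, FD3c, FC3, FN, FNc, FP4, relOf])))))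
      · exact Or.inl (lne2 (hN 1 0 (by decide) (by simp [FD3, FA, FB, FD3c, FC3, FN, FNc, FP4, relOf])) (hE 2 0 (by decide) (by simp [FD3, FA, FB, FD3c, FC3, FN, FNc, FP4, relOf])))
    -- FN
    · rintro ⟨ι, hinj, hiff⟩
      have hE : ∀ k l : Fin 4, k ≠ l → FN k l → φ (ι k) (ι l) = i :=
        fun k l h hk => ((hiff k l h).mpr hk).2
      have hN : ∀ k l : Fin 4, k ≠ l → ¬ FN k l → φ (ι k) (ι l) ≠ i :=
        fun k l h hk hv => hk ((hiff k l h).mp ⟨hinj.ne h, hv⟩)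
      have d01 : ι 0 ≠ ι 1 := hinj.ne (by decide)
      have d02 : ι 0 ≠ ι 2 := hinj.ne (by decide)
      have d03 : ι 0 ≠ ι 3 := hinj.ne (by decide)
      have d12 : ι 1 ≠ ι 2 := hinj.ne (by decide)
      have d13 : ι 1 ≠ ι 3 := hinj.ne (by decide)
      have d23 : ι 2 ≠ ι 3 := hinj.ne (by decide)
      refine hUnp {ι 0, ι 1, ι 2, ι 3} ?_
        (prime4 d01 d02 d03 d12 d13 d23 ?_ ?_ ?_ ?_ ?_ ?_ ?_ ?_ ?_ ?_)
      · rw [ncard_quad d01 d02 d03 d12 d13 d23]; omega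
      · exact Or.inl (lne2 (hN 0 2 (by decide) (by simp [FD3, FA, FB, FD3c, FC3, FN, FNc, FP4, relOf])) (hE 1 2 (by decide) (by simp [FD3, FA, FB, FD3c, FC3, FN, FNc, FP4, relOf])))
      · exact Or.inr (Or.inr (Or.inr (lne2 (hN 3 0 (by decide) (by simp [FD3, FA, FB, FD3c, FC3, FN, FNc, FP4, relOf])) (hE 3 2 (by decide) (by simp [FD3, FA, FB, FD3c, FC3, FN, FNc, FP4, relOf])))))
      · exact Or.inr (Or.inr (Or.inl (lne2 (hN 0 2 (by decide) (by simp [FD3, FA, FB, FD3c, FC3, FN, FNc, FP4, relOf])) (hE 3 2 (by decide) (by simp [FD3, FA, FB, FD3c, FC3, FN, FNc, FP4, relOf])))))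
      · exact Or.inl (lne1 (hE 1 0 (by decide) (by simp [FD3, FA, FB, FD3c, FC3, FN, FNc, FP4, relOf])) (hN 2 0 (by decide) (by simp [FD3, FA, FB, FD3c, FC3, FN, FNc, FP4, relOf])))
      · exact Or.inl (lne1 (hE 1 0 (by decide) (by simp [FD3, FA, FB, FD3c, FC3, FN, FNc, FP4, relOf])) (hN 3 0 (by decide) (by simp [FD3, FA, FB, FD3c, FC3, FN, FNc, FP4, relOf])))
      · exact Or.inr (Or.inr (Or.inr (lne1 (hE 1 2 (by decide) (by simp [FD3, FA, FB, FD3c, FC3, FN, FNc, FP4, relOf])) (hN 1 3 (by decide) (by simp [FD3, FA, FB, FD3c, FC3, FN, FNc, FP4, relOf])))))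
      · exact Or.inr (Or.inr (Or.inr (lne2 (hN 3 1 (by decide) (by simp [FD3, FA, FB, FD3c, FC3, FN, FNc, FP4, relOf])) (hE 3 2 (by decide) (by simp [FD3, FA, FB, FD3c, FC3, FN, FNc, FP4, relOf])))))
      · exact Or.inl (lne2 (hN 0 2 (by decide) (by simp [FD3, FA, FB, FD3c, FC3, FN, FNc, FP4, relOf])) (hE 1 2 (by decide) (by simp [FD3, FA, FB, FD3c, FC3, FN, FNc, FP4, relOf])))
      · exact Or.inr (Or.inr (Or.inr (lne1 (hE 1 2 (by decide) (by simp [FD3, FA, FB, FD3c, FC3, FN, FNc, FP4, relOf])) (hN 1 3 (by decide) (by simp [FD3, FA, FB, FD3c, FC3, FN, FNc, FP4, relOf])))))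
      · exact Or.inl (lne1 (hE 1 0 (by decide) (by simp [FD3, FA, FB, FD3c, FC3, FN, FNc, FP4, relOf])) (hN 2 0 (by decide) (by simp [FD3, FA, FB, FD3c, FC3, FN, FNc, FP4, relOf])))
    -- FP4
    · rintro ⟨ι, hinj, hiff⟩
      have hE : ∀ k l : Fin 4, k ≠ l → FP4 k l → φ (ι k) (ι l) = i :=
        fun k l h hk => ((hiff k l h).mpr hk).2
      have hN : ∀ k l : Fin 4, k ≠ l → ¬ FP4 k l → φ (ι k) (ι l) ≠ i :=
        fun k l h hk hv => hk ((hiff k l h).mp ⟨hinj.ne h, hv⟩)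
      have d01 : ι 0 ≠ ι 1 := hinj.ne (by decide)
      have d02 : ι 0 ≠ ι 2 := hinj.ne (by decide)
      have d03 : ι 0 ≠ ι 3 := hinj.ne (by decide)
      have d12 : ι 1 ≠ ι 2 := hinj.ne (by decide)
      have d13 : ι 1 ≠ ι 3 := hinj.ne (by decide)
      have d23 : ι 2 ≠ ι 3 := hinj.ne (by decide)
      refine hUnp {ι 0, ι 1, ι 2, ι 3} ?_
        (prime4 d01 d02 d03 d12 d13 d23 ?_ ?_ ?_ ?_ ?_ ?_ ?_ ?_ ?_ ?_)
      · rw [ncard_quad d01 d02 d03 d12 d13 d23]; omega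
      · exact Or.inl (lne2 (hN 0 2 (by decide) (by simp [FD3, FA, FB, FD3c, FC3, FN, FNc, FP4, relOf])) (hE 1 2 (by decide) (by simp [FD3, FA, FB, FD3c, FC3, FN, FNc, FP4, relOf])))
      · exact Or.inr (Or.inr (Or.inl (lne2 (hN 0 3 (by decide) (by simp [FD3, FA, FB, FD3c, FC3, FN, FNc, FP4, relOf])) (hE 2 3 (by decide) (by simp [FD3, FA, FB, FD3c, FC3, FN, FNc, FP4, relOf])))))
      · exact Or.inl (lne1 (hE 0 1 (by decide) (by simp [FD3, FA, FB, FD3c, FC3, FN, FNc, FP4, relOf])) (hN 3 1 (by decide) (by simp [FD3, FA, FB, FD3c, FC3, FN, FNc, FP4, relOf])))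
      · exact Or.inl (lne1 (hE 1 0 (by decide) (by simp [FD3, FA, FB, FD3c, FC3, FN, FNc, FP4, relOf])) (hN 2 0 (by decide) (by simp [FD3, FA, FB, FD3c, FC3, FN, FNc, FP4, relOf])))
      · exact Or.inl (lne1 (hE 1 0 (by decide) (by simp [FD3, FA, FB, FD3c, FC3, FN, FNc, FP4, relOf])) (hN 3 0 (by decide) (by simp [FD3, FA, FB, FD3c, FC3, FN, FNc, FP4, relOf])))
      · exact Or.inr (Or.inr (Or.inl (lne1 (hE 2 1 (by decide) (by simp [FD3, FA, FB, FD3c, FC3, FN, FNc, FP4, relOf])) (hN 3 1 (by decide) (by simp [FD3, FA, FB, FD3c, FC3, FN, FNc, FP4, relOf])))))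
      · exact Or.inr (Or.inl (lne2 (hN 1 3 (by decide) (by simp [FD3, FA, FB, FD3c, FC3, FN, FNc, FP4, relOf])) (hE 2 3 (by decide) (by simp [FD3, FA, FB, FD3c, FC3, FN, FNc, FP4, relOf]))))
      · exact Or.inl (lne2 (hN 0 2 (by decide) (by simp [FD3, FA, FB, FD3c, FC3, FN, FNc, FP4, relOf])) (hE 1 2 (by decide) (by simp [FD3, FA, FB, FD3c, FC3, FN, FNc, FP4, relOf])))
      · exact Or.inr (Or.inl (lne1 (hE 2 1 (by decide) (by simp [FD3, FA, FB, FD3c, FC3, FN, FNc, FP4, relOf])) (hN 3 1 (by decide) (by simp [FD3, FA, FB, FD3c, FC3, FN, FNc, FP4, relOf]))))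
      · exact Or.inl (lne1 (hE 1 0 (by decide) (by simp [FD3, FA, FB, FD3c, FC3, FN, FNc, FP4, relOf])) (hN 2 0 (by decide) (by simp [FD3, FA, FB, FD3c, FC3, FN, FNc, FP4, relOf])))
  · intro x y z hxy hxz hyz
    by_contra hcon
    have hd : ¬ (Dset φ x y = Dset φ x z ∨ Dset φ x y = Dset φ y z ∨
        Dset φ x z = Dset φ y z) := fun h => hcon (ncard_le_two_of_eq h)
    push_neg at hd
    refine hUnp {x, y, z} (le_of_eq (ncard_triple hxy hxz hyz).symm)
      (prime3 hxy hxz hyz ?_ ?_ ?_)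
    · by_contra hq
      push_neg at hq
      exact hd.2.2 (by rw [Dset, Dset, hq.1, hq.2])
    · by_contra hq
      push_neg at hq
      exact hd.2.1 (by rw [Dset, Dset, hq.1, hq.2, Set.pair_comm])
    · by_contra hq
      push_neg at hq
      exact hd.1 (by rw [Dset, Dset, hq.1, hq.2])

end dirB

section dirA
variable {φ : V → V → Υ}

/-- Tree representation of a 2-structure on a set of vertices. -/
inductive TreeRep (φ : V → V → Υ) : Set V → Prop where
  | single (v : V) : TreeRep φ {v}
  | node (X : Set V) (m : Υ) (r : V → ℕ)
      (hne : ∃ u ∈ X, ∃ v ∈ X, r u ≠ r v)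
      (hcross : ∀ u ∈ X, ∀ v ∈ X, r u < r v → φ u v = m)
      (hfib : ∀ t : ℕ, ({u ∈ X | r u = t}).Nonempty → TreeRep φ {u ∈ X | r u = t}) :
      TreeRep φ X

theorem rep_not_prime (hrev : Reversible φ) {X : Set V} (h3 : 3 ≤ X.ncard)
    (hR : TreeRep φ X) : ¬ IsPrimeOn φ X := by
  have hfin : X.Finite := by
    by_contra h
    rw [Set.Infinite.ncard (Set.not_infinite.not_right.mp (fun hf => h hf))] at h3
    · omega
  cases hR with
  | single v => simp [Set.ncard_singleton] at h3
  | node X m r hne hcross hfib =>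
    have hXne : X.Nonempty := Set.nonempty_of_ncard_ne_zero (by omega)
    obtain ⟨utop, hutop, htop⟩ := Set.exists_max_image X r hfin hXne
    obtain ⟨ubot, hubot, hbot⟩ := Set.exists_min_image X r hfin hXne
    obtain ⟨u1, hu1, v1, hv1, huv1⟩ := hne
    have hbt : r ubot ≠ r utop := by
      intro h
      apply huv1
      have h1 := hbot u1 hu1
      have h2 := htop u1 hu1
      have h3 := hbot v1 hv1
      have h4 := htop v1 hv1
      omega
    have hmodT : IsModuleOn φ X (X \ {u ∈ X | r u = r utop}) := by
      refine ⟨Set.diff_subset, ?_⟩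
      intro a ha b hb z hz
      have hzT : r z = r utop := by
        by_contra hc
        exact hz.2 ⟨hz.1, fun h => hc h.2⟩
      have haz : a ≠ z := fun h => (h ▸ ha).2 ⟨hz.1, h ▸ hzT⟩
      have hbz : b ≠ z := fun h => (h ▸ hb).2 ⟨hz.1, h ▸ hzT⟩
      have ha2 : r a < r z := by
        have := htop a ha.1
        have : r a ≠ r utop := fun h => ha.2 ⟨ha.1, h⟩
        omega
      have hb2 : r b < r z := by
        have := htop b hb.1
        have : r b ≠ r utop := fun h => hb.2 ⟨hb.1, h⟩
        omega
      have e1 : φ a z = m := hcross a ha.1 z hz.1 ha2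
      have e2 : φ b z = m := hcross b hb.1 z hz.1 hb2
      exact ⟨e1.trans e2.symm, hrev a z b z haz hbz (e1.trans e2.symm)⟩
    have hmodB : IsModuleOn φ X (X \ {u ∈ X | r u = r ubot}) := by
      refine ⟨Set.diff_subset, ?_⟩
      intro a ha b hb z hz
      have hzB : r z = r ubot := by
        by_contra hc
        exact hz.2 ⟨hz.1, fun h => hc h.2⟩
      have haz : a ≠ z := fun h => (h ▸ ha).2 ⟨hz.1, h ▸ hzB⟩
      have hbz : b ≠ z := fun h => (h ▸ hb).2 ⟨hz.1, h ▸ hzB⟩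
      have ha2 : r z < r a := by
        have := hbot a ha.1
        have : r a ≠ r ubot := fun h => ha.2 ⟨ha.1, h⟩
        omega
      have hb2 : r z < r b := by
        have := hbot b hb.1
        have : r b ≠ r ubot := fun h => hb.2 ⟨hb.1, h⟩
        omega
      have e1 : φ z a = m := hcross z hz.1 a ha.1 ha2
      have e2 : φ z b = m := hcross z hz.1 b hb.1 hb2
      exact ⟨hrev z a z b haz.symm hbz.symm (e1.trans e2.symm), e1.trans e2.symm⟩
    have hbotmem : ubot ∈ X \ {u ∈ X | r u = r utop} := ⟨hubot, fun h => hbt h.2⟩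
    have htopmem : utop ∈ X \ {u ∈ X | r u = r ubot} := ⟨hutop, fun h => hbt h.2.symm⟩
    by_cases h2 : 2 ≤ (X \ {u ∈ X | r u = r utop}).ncard
    · intro hp
      rcases hp _ hmodT with h | ⟨w, hw⟩ | h
      · rw [h] at hbotmem
        exact hbotmem
      · rw [hw, Set.ncard_singleton] at h2
        omega
      · have : utop ∈ X \ {u ∈ X | r u = r utop} := by rw [h]; exact hutop
        exact this.2 ⟨hutop, rfl⟩
    · have hTsub : {u ∈ X | r u = r utop} ⊆ X \ {u ∈ X | r u = r ubot} :=
        fun y hy => ⟨hy.1, fun h => hbt (h.2 ▸ hy.2)⟩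
      have hcount : ({u ∈ X | r u = r utop}).ncard + (X \ {u ∈ X | r u = r utop}).ncard
          = X.ncard := by
        rw [add_comm]
        exact Set.ncard_diff_add_ncard_of_subset (fun y hy => hy.1) hfin
      have h2' : 2 ≤ (X \ {u ∈ X | r u = r ubot}).ncard := by
        have := Set.ncard_le_ncard hTsub (hfin.subset Set.diff_subset)
        omega
      intro hp
      rcases hp _ hmodB with h | ⟨w, hw⟩ | h
      · rw [h] at htopmem
        exact htopmem
      · rw [hw, Set.ncard_singleton] at h2'
        omega
      · have : ubot ∈ X \ {u ∈ X | r u = r ubot} := by rw [h]; exact hubot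
        exact this.2 ⟨hubot, rfl⟩


section lemmas
variable {Y : Set V} {x : V} {m m' : Υ} {r : V → ℕ}

theorem lemPE (hxY : x ∉ Y)
    (hfrom : ∀ a b : V, a ≠ b → φ a b = m' → φ b a = m)
    {s : V} (hs : s ∈ Y) (hs1 : φ x s ≠ m) (hs2 : φ s x ≠ m) :
    φ x s ≠ m' ∧ φ s x ≠ m' := by
  have hxs : x ≠ s := fun h => hxY (h ▸ hs)
  exact ⟨fun h => hs2 (hfrom x s hxs h), fun h => hs1 (hfrom s x hxs.symm h)⟩

theorem crossval (hcross : ∀ u ∈ Y, ∀ v ∈ Y, r u < r v → φ u v = m)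
    (hto : ∀ a b : V, a ≠ b → φ a b = m → φ b a = m')
    {a b : V} (ha : a ∈ Y) (hb : b ∈ Y) (hab : r a ≠ r b) :
    φ a b = m ∨ φ a b = m' := by
  rcases Nat.lt_or_ge (r a) (r b) with h | h
  · exact Or.inl (hcross a ha b hb h)
  · have hlt : r b < r a := by omega
    have hba : b ≠ a := fun hq => hab (congrArg r hq.symm)
    exact Or.inr (hto b a hba (hcross b hb a ha hlt))

theorem lemPCcore (hU1 : CondU1 φ) (hU2 : CondU2 φ) (hxY : x ∉ Y)
    (hcross : ∀ u ∈ Y, ∀ v ∈ Y, r u < r v → φ u v = m)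
    (hto : ∀ a b : V, a ≠ b → φ a b = m → φ b a = m')
    (hfrom : ∀ a b : V, a ≠ b → φ a b = m' → φ b a = m)
    {s t : V} (hs : s ∈ Y) (ht : t ∈ Y)
    (hs1 : φ x s ≠ m) (hs2 : φ s x ≠ m) (ht1 : φ x t ≠ m) (ht2 : φ t x ≠ m)
    (hst : r s < r t) : φ x s = φ x t ∧ φ s x = φ t x := by
  have hxs : x ≠ s := fun h => hxY (h ▸ hs)
  have hxt : x ≠ t := fun h => hxY (h ▸ ht)
  have hstne : s ≠ t := fun h => hst.ne (congrArg r h)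
  have est : φ s t = m := hcross s hs t ht hst
  have ets : φ t s = m' := hto s t hstne est
  have hpes := lemPE hxY hfrom hs hs1 hs2
  have hkill : ∀ w1 w2 : V, φ w1 w2 ≠ m → φ w2 w1 ≠ m →
      Dset φ w1 w2 ≠ Dset φ s t := by
    intro w1 w2 hn1 hn2 hq
    have hmem : m ∈ Dset φ w1 w2 := by
      rw [hq, Dset]
      exact Set.mem_insert_iff.mpr (Or.inl est.symm)
    rcases Set.mem_insert_iff.mp hmem with h' | h'
    · exact hn1 h'.symm
    · exact hn2 (Set.mem_singleton_iff.mp h').symm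
  rcases three_of_ncard_le_two (hU2 x s t hxs hxt hstne) with h | h | h
  · rcases pairEq h with ⟨h1, h2⟩ | ⟨h1, h2⟩
    · exact ⟨h1, h2⟩
    · by_cases hpq : φ x s = φ s x
      · exact ⟨hpq.trans h2, hpq.symm.trans h1⟩
      · exfalso
        refine LD3 (i := φ x s) hU1 hxt.symm hstne.symm hxs h1.symm rfl
          (fun hh => hpq (h2.trans hh).symm)
          (fun hh => hpes.1 (ets.symm.trans hh).symm)
          (fun hh => hs1 (est.symm.trans hh).symm)
          (fun hh => hpq hh.symm)
  · exact absurd h (hkill x s hs1 hs2)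
  · exact absurd h (hkill x t ht1 ht2)

theorem lemPC (hU1 : CondU1 φ) (hU2 : CondU2 φ) (hxY : x ∉ Y)
    (hcross : ∀ u ∈ Y, ∀ v ∈ Y, r u < r v → φ u v = m)
    (hto : ∀ a b : V, a ≠ b → φ a b = m → φ b a = m')
    (hfrom : ∀ a b : V, a ≠ b → φ a b = m' → φ b a = m)
    {s t : V} (hs : s ∈ Y) (ht : t ∈ Y)
    (hs1 : φ x s ≠ m) (hs2 : φ s x ≠ m) (ht1 : φ x t ≠ m) (ht0 : φ t x ≠ m)
    (hst : r s ≠ r t) : φ x s = φ x t ∧ φ s x = φ t x := by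
  rcases Nat.lt_or_ge (r s) (r t) with h | h
  · exact lemPCcore hU1 hU2 hxY hcross hto hfrom hs ht hs1 hs2 ht1 ht0 h
  · have h' : r t < r s := by omega
    obtain ⟨h1, h2⟩ := lemPCcore hU1 hU2 hxY hcross hto hfrom ht hs ht1 ht0 hs1 hs2 h'
    exact ⟨h1.symm, h2.symm⟩

theorem lemM1 (hU1 : CondU1 φ) (hxY : x ∉ Y)
    (hcross : ∀ u ∈ Y, ∀ v ∈ Y, r u < r v → φ u v = m)
    (hto : ∀ a b : V, a ≠ b → φ a b = m → φ b a = m')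
    {u w : V} (hu : u ∈ Y) (hw : w ∈ Y)
    (h1 : φ u x = m) (h2 : φ x w = m) (h3 : φ w x ≠ m) (hlt : r w < r u) :
    False := by
  have hxu : x ≠ u := fun h => hxY (h ▸ hu)
  have hxw : x ≠ w := fun h => hxY (h ▸ hw)
  have hwu : w ≠ u := fun h => hlt.ne (congrArg r h)
  have ewu : φ w u = m := hcross w hw u hu hlt
  have hm'1 : φ w x = m' := hto x w hxw h2
  have hmm' : m' ≠ m := fun hh => h3 (hm'1.trans hh)
  refine LC3 (i := m) hU1 hxw hxu hwu h2 ewu h1 h3 ?_ ?_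
  · rw [hto w u hwu ewu]
    exact hmm'
  · rw [hto u x hxu.symm h1]
    exact hmm'

theorem lemM3 (hU1 : CondU1 φ) (hxY : x ∉ Y)
    (hcross : ∀ u ∈ Y, ∀ v ∈ Y, r u < r v → φ u v = m)
    (hto : ∀ a b : V, a ≠ b → φ a b = m → φ b a = m')
    {s u : V} (hs : s ∈ Y) (hs1 : φ x s ≠ m) (hs2 : φ s x ≠ m)
    (hu : u ∈ Y) (hlt : r s < r u) (h1 : φ u x = m) (hmm' : m' ≠ m) :
    False := by
  have hxu : x ≠ u := fun h => hxY (h ▸ hu)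
  have hxs : x ≠ s := fun h => hxY (h ▸ hs)
  have hsu : s ≠ u := fun h => hlt.ne (congrArg r h)
  have esu : φ s u = m := hcross s hs u hu hlt
  refine LD3 (i := m) hU1 hsu hxs.symm hxu.symm esu h1 ?_ hs2 hs1 ?_
  · rw [hto s u hsu esu]
    exact hmm'
  · rw [hto u x hxu.symm h1]
    exact hmm'

theorem lemM4 (hU1 : CondU1 φ) (hxY : x ∉ Y)
    (hcross : ∀ u ∈ Y, ∀ v ∈ Y, r u < r v → φ u v = m)
    (hto : ∀ a b : V, a ≠ b → φ a b = m → φ b a = m')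
    {s u : V} (hs : s ∈ Y) (hs1 : φ x s ≠ m) (hs2 : φ s x ≠ m)
    (hu : u ∈ Y) (hlt : r u < r s) (h1 : φ x u = m) (hmm' : m' ≠ m) :
    False := by
  have hxu : x ≠ u := fun h => hxY (h ▸ hu)
  have hxs : x ≠ s := fun h => hxY (h ▸ hs)
  have hus : u ≠ s := fun h => hlt.ne (congrArg r h)
  have eus : φ u s = m := hcross u hu s hs hlt
  refine LD3 (i := m) hU1 hxu hxs hus h1 eus ?_ hs1 hs2 ?_
  · rw [hto x u hxu h1]
    exact hmm'
  · rw [hto u s hus eus]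
    exact hmm'

theorem lemM6core (hU1 : CondU1 φ) (hU2 : CondU2 φ) (hxY : x ∉ Y)
    (hcross : ∀ u ∈ Y, ∀ v ∈ Y, r u < r v → φ u v = m)
    (hto : ∀ a b : V, a ≠ b → φ a b = m → φ b a = m')
    (hfrom : ∀ a b : V, a ≠ b → φ a b = m' → φ b a = m)
    {s v w : V} (hs : s ∈ Y) (hs1 : φ x s ≠ m) (hs2 : φ s x ≠ m)
    (hv : v ∈ Y) (hvs : r v ≠ r s)
    (hw : w ∈ Y) (hws : r w = r s) (hwne : w ≠ s)
    (hpv : φ x v = φ x s) (hqv : φ v x = φ s x)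
    (hD : (φ w x = m ∧ φ x w = m') ∨ (φ x w = m ∧ φ w x = m')) :
    (φ s w = m ∧ φ w s = m') ∨ (φ s w = m' ∧ φ w s = m) := by
  have hxs : x ≠ s := fun h => hxY (h ▸ hs)
  have hxv : x ≠ v := fun h => hxY (h ▸ hv)
  have hxw : x ≠ w := fun h => hxY (h ▸ hw)
  have hvsne : v ≠ s := fun h => hvs (congrArg r h)
  have hvw : v ≠ w := fun h => hvs ((congrArg r h).trans hws)
  have hrvw : r v ≠ r w := fun h => hvs (h.trans hws)
  have hpes := lemPE hxY hfrom hs hs1 hs2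
  have hnotp : ∀ z : Υ, z = m ∨ z = m' → z ≠ φ x s ∧ z ≠ φ s x := by
    rintro z (rfl | rfl)
    · exact ⟨Ne.symm hs1, Ne.symm hs2⟩
    · exact ⟨Ne.symm hpes.1, Ne.symm hpes.2⟩
  have hxwm : φ x w = m ∨ φ x w = m' := by
    rcases hD with ⟨_, h2⟩ | ⟨h1, _⟩
    · exact Or.inr h2
    · exact Or.inl h1
  have hwxm : φ w x = m ∨ φ w x = m' := by
    rcases hD with ⟨h1, _⟩ | ⟨_, h2⟩
    · exact Or.inl h1
    · exact Or.inr h2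
  have hDm : m ∈ Dset φ x w := by
    rcases hD with ⟨h1, _⟩ | ⟨h1, _⟩
    · rw [Dset, h1]
      simp
    · rw [Dset, h1]
      simp
  rcases three_of_ncard_le_two (hU2 x s w hxs hxw hwne.symm) with h | h | h
  · exfalso
    have : m ∈ Dset φ x s := h.symm ▸ hDm
    rcases Set.mem_insert_iff.mp this with h' | h'
    · exact hs1 h'.symm
    · exact hs2 (Set.mem_singleton_iff.mp h').symm
  · -- Dset φ x s = Dset φ s w : forbidden
    exfalso
    have hvsv : φ v s = m ∨ φ v s = m' := crossval hcross hto hv hs hvs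
    have hsvv : φ s v = m ∨ φ s v = m' := crossval hcross hto hs hv (Ne.symm hvs)
    have hvwv : φ v w = m ∨ φ v w = m' := crossval hcross hto hv hw hrvw
    have hwvv : φ w v = m ∨ φ w v = m' := crossval hcross hto hw hv (Ne.symm hrvw)
    have hpair := pairEq (h : Dset φ x s = Dset φ s w)
    by_cases hpq : φ x s = φ s x
    · refine LP4 (i := φ x s) hU1 hxv.symm hvsne hvw hxs hxw hwne.symm
        (hqv.trans hpq.symm) hpv rfl hpq.symm ?_ ?_
        (hnotp _ hvsv).1 (hnotp _ hsvv).1 (hnotp _ hvwv).1 (hnotp _ hwvv).1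
        (hnotp _ hxwm).1 (hnotp _ hwxm).1
      · rcases hpair with ⟨h1, _⟩ | ⟨_, h2⟩
        · exact h1.symm
        · exact h2.symm.trans hpq.symm
      · rcases hpair with ⟨_, h2⟩ | ⟨h1, _⟩
        · exact h2.symm.trans hpq.symm
        · exact h1.symm
    · rcases hpair with ⟨h1, h2⟩ | ⟨h1, h2⟩
      · exact LD3 (i := φ x s) hU1 hxs hxw hwne.symm rfl h1.symm
          (fun hh => hpq hh.symm) (hnotp _ hxwm).1 (hnotp _ hwxm).1
          (fun hh => hpq (h2.trans hh).symm)
      · exact LN (i := φ x s) hU1 hxv.symm hvsne hvw hxs hxw hwne.symm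
          hpv rfl h1.symm
          (fun hh => hpq (hqv.symm.trans hh).symm)
          (hnotp _ hvsv).1 (hnotp _ hvwv).1 (hnotp _ hxwm).1
          (hnotp _ hsvv).1 (fun hh => hpq hh.symm)
          (fun hh => hpq (h2.trans hh).symm)
          (hnotp _ hwvv).1 (hnotp _ hwxm).1
  · -- Dset φ x w = Dset φ s w : read off
    rcases hD with ⟨h1, h2⟩ | ⟨h1, h2⟩
    · have hq : ({m', m} : Set Υ) = Dset φ s w := by
        rw [← h, Dset, h1, h2]
      rcases pairEq hq with ⟨k1, k2⟩ | ⟨k1, k2⟩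
      · exact Or.inr ⟨k1.symm, k2.symm⟩
      · exact Or.inl ⟨k2.symm, k1.symm⟩
    · have hq : ({m, m'} : Set Υ) = Dset φ s w := by
        rw [← h, Dset, h1, h2]
      rcases pairEq hq with ⟨k1, k2⟩ | ⟨k1, k2⟩
      · exact Or.inl ⟨k1.symm, k2.symm⟩
      · exact Or.inr ⟨k2.symm, k1.symm⟩

theorem lemM6A (hU1 : CondU1 φ) (hU2 : CondU2 φ) (hxY : x ∉ Y)
    (hcross : ∀ u ∈ Y, ∀ v ∈ Y, r u < r v → φ u v = m)
    (hto : ∀ a b : V, a ≠ b → φ a b = m → φ b a = m')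
    (hfrom : ∀ a b : V, a ≠ b → φ a b = m' → φ b a = m)
    {s v w : V} (hs : s ∈ Y) (hs1 : φ x s ≠ m) (hs2 : φ s x ≠ m)
    (hv : v ∈ Y) (hvs : r v ≠ r s)
    (hw : w ∈ Y) (hws : r w = r s) (hwne : w ≠ s)
    (hpv : φ x v = φ x s) (hqv : φ v x = φ s x)
    (hwx : φ w x = m) (hxw : φ x w = m') :
    φ w s = m := by
  have hxs : x ≠ s := fun h => hxY (h ▸ hs)
  have hxw' : x ≠ w := fun h => hxY (h ▸ hw)
  rcases lemM6core hU1 hU2 hxY hcross hto hfrom hs hs1 hs2 hv hvs hw hws hwne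
      hpv hqv (Or.inl ⟨hwx, hxw⟩) with ⟨h1, h2⟩ | ⟨h1, h2⟩
  · by_cases hmm : m' = m
    · exact h2.trans hmm
    · exact absurd (LD3 (i := m) hU1 hwne.symm hxs.symm hxw'.symm h1 hwx
        (by rw [h2]; exact hmm) hs2 hs1 (by rw [hxw]; exact hmm)) id
  · exact h2

theorem lemM6B (hU1 : CondU1 φ) (hU2 : CondU2 φ) (hxY : x ∉ Y)
    (hcross : ∀ u ∈ Y, ∀ v ∈ Y, r u < r v → φ u v = m)
    (hto : ∀ a b : V, a ≠ b → φ a b = m → φ b a = m')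
    (hfrom : ∀ a b : V, a ≠ b → φ a b = m' → φ b a = m)
    {s v w : V} (hs : s ∈ Y) (hs1 : φ x s ≠ m) (hs2 : φ s x ≠ m)
    (hv : v ∈ Y) (hvs : r v ≠ r s)
    (hw : w ∈ Y) (hws : r w = r s) (hwne : w ≠ s)
    (hpv : φ x v = φ x s) (hqv : φ v x = φ s x)
    (hxw : φ x w = m) (hwx : φ w x = m') :
    φ s w = m := by
  have hxs : x ≠ s := fun h => hxY (h ▸ hs)
  have hxw' : x ≠ w := fun h => hxY (h ▸ hw)
  rcases lemM6core hU1 hU2 hxY hcross hto hfrom hs hs1 hs2 hv hvs hw hws hwne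
      hpv hqv (Or.inr ⟨hxw, hwx⟩) with ⟨h1, h2⟩ | ⟨h1, h2⟩
  · exact h1
  · by_cases hmm : m' = m
    · exact h1.trans hmm
    · exact absurd (LD3 (i := m) hU1 hxw' hxs hwne hxw h2
        (by rw [hwx]; exact hmm) hs1 hs2 (by rw [h1]; exact hmm)) id

end lemmas

section constructions
variable {Y : Set V} {x : V} {m m' : Υ} {r : V → ℕ}

theorem lemCU (hxY : x ∉ Y)
    (hne : ∃ u ∈ Y, ∃ v ∈ Y, r u ≠ r v)
    (hcross : ∀ u ∈ Y, ∀ v ∈ Y, r u < r v → φ u v = m)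
    (hfib : ∀ t : ℕ, ({u ∈ Y | r u = t}).Nonempty → TreeRep φ {u ∈ Y | r u = t})
    (c : ℕ)
    (hltc : ∀ u ∈ Y, r u < c → φ u x = m)
    (hgtc : ∀ u ∈ Y, c < r u → φ x u = m)
    (hRepC : TreeRep φ (insert x {u ∈ Y | r u = c})) :
    TreeRep φ (insert x Y) := by
  classical
  set r' : V → ℕ := fun y => if y = x then c else r y with hr'
  have hr'x : r' x = c := by simp [hr']
  have hr'y : ∀ y ∈ Y, r' y = r y := by
    intro y hy
    simp only [hr']
    exact if_neg (fun (h : y = x) => hxY (h ▸ hy))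
  refine TreeRep.node _ m r' ?_ ?_ ?_
  · obtain ⟨u, hu, v, hv, huv⟩ := hne
    exact ⟨u, Or.inr hu, v, Or.inr hv, by rw [hr'y u hu, hr'y v hv]; exact huv⟩
  · intro u hu v hv hlt'
    by_cases hux : u = x
    · have hvY : v ∈ Y := by
        rcases Set.mem_insert_iff.mp hv with h | h
        · exfalso
          rw [hux, h] at hlt'
          exact lt_irrefl _ hlt'
        · exact h
      have hcv : c < r v := by
        rw [hux, hr'x, hr'y v hvY] at hlt'
        exact hlt'
      rw [hux]
      exact hgtc v hvY hcv
    · have huY : u ∈ Y := by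
        rcases Set.mem_insert_iff.mp hu with h | h
        · exact absurd h hux
        · exact h
      by_cases hvx : v = x
      · have hcu : r u < c := by
          rw [hr'y u huY, hvx, hr'x] at hlt'
          exact hlt'
        rw [hvx]
        exact hltc u huY hcu
      · have hvY : v ∈ Y := by
          rcases Set.mem_insert_iff.mp hv with h | h
          · exact absurd h hvx
          · exact h
        refine hcross u huY v hvY ?_
        rw [hr'y u huY, hr'y v hvY] at hlt'
        exact hlt'
  · intro t ht
    by_cases htc : t = c
    · subst htc
      have hset : {y ∈ insert x Y | r' y = t} = insert x {u ∈ Y | r u = t} := by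
        ext y
        simp only [Set.mem_setOf_eq, Set.mem_insert_iff]
        constructor
        · rintro ⟨rfl | hy, hry⟩
          · exact Or.inl rfl
          · exact Or.inr ⟨hy, (hr'y y hy).symm.trans hry⟩
        · rintro (rfl | ⟨hy, hry⟩)
          · exact ⟨Or.inl rfl, hr'x⟩
          · exact ⟨Or.inr hy, (hr'y y hy).trans hry⟩
      rw [hset]
      exact hRepC
    · have hset : {y ∈ insert x Y | r' y = t} = {u ∈ Y | r u = t} := by
        ext y
        simp only [Set.mem_setOf_eq, Set.mem_insert_iff]
        constructor
        · rintro ⟨rfl | hy, hry⟩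
          · exact absurd (hr'x.symm.trans hry).symm htc
          · exact ⟨hy, (hr'y y hy).symm.trans hry⟩
        · rintro ⟨hy, hry⟩
          exact ⟨Or.inr hy, (hr'y y hy).trans hry⟩
      rw [hset] at ht ⊢
      exact hfib t ht

theorem lemCDelta (hxY : x ∉ Y) (hYfin : Y.Finite)
    (hcross : ∀ u ∈ Y, ∀ v ∈ Y, r u < r v → φ u v = m)
    {S : Set V} (hSY : S ⊆ Y)
    (H0 : ∀ w ∈ Y, w ∉ S → φ w x = m ∨ φ x w = m)
    (H2 : ∀ u ∈ Y, u ∉ S → ∀ w ∈ Y, w ∉ S → φ u x = m → φ x w = m →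
      φ w x ≠ m → r u < r w)
    (H3 : ∀ w ∈ Y, w ∉ S → φ w x = m → ∀ s ∈ S, φ w s = m)
    (H4 : ∀ w ∈ Y, w ∉ S → φ x w = m → φ w x ≠ m → ∀ s ∈ S, φ s w = m)
    (hw0 : ∃ w ∈ Y, w ∉ S)
    (hRepY : TreeRep φ (insert x S))
    (hRepF : ∀ t : ℕ, ({u ∈ Y | r u = t} \ S).Nonempty →
      TreeRep φ ({u ∈ Y | r u = t} \ S)) :
    TreeRep φ (insert x Y) := by
  classical
  obtain ⟨τ, hτne, hAiff⟩ :
      ∃ τ : ℕ, (∀ y ∈ Y, y ∉ S → 2 * r y + 2 ≠ τ) ∧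
        (∀ y ∈ Y, y ∉ S → (φ y x = m ↔ 2 * r y + 2 < τ)) := by
    by_cases hAne : {u | u ∈ Y ∧ u ∉ S ∧ φ u x = m}.Nonempty
    · obtain ⟨wT, hwT, hmax⟩ := Set.exists_max_image {u | u ∈ Y ∧ u ∉ S ∧ φ u x = m} r
        (hYfin.subset (fun y hy => hy.1)) hAne
      refine ⟨2 * r wT + 3, fun y _ _ => by omega, fun y hy hyS => ⟨?_, ?_⟩⟩
      · intro hyx
        have := hmax y ⟨hy, hyS, hyx⟩
        omega
      · intro hlt
        by_contra hyx
        rcases H0 y hy hyS with h | h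
        · exact hyx h
        · have := H2 wT hwT.1 hwT.2.1 y hy hyS hwT.2.2 h hyx
          omega
    · refine ⟨0, fun y _ _ => by omega, fun y hy hyS => ⟨?_, ?_⟩⟩
      · intro hyx
        exact absurd ⟨y, hy, hyS, hyx⟩ hAne
      · omega
  set r' : V → ℕ := fun y => if y = x ∨ y ∈ S then τ else 2 * r y + 2 with hr'
  have hr'Y : ∀ y ∈ Y, y ∉ S → r' y = 2 * r y + 2 := by
    intro y hy hyS
    simp only [hr']
    refine if_neg ?_
    rintro (rfl | h)
    · exact hxY hy
    · exact hyS h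
  have hr'P : ∀ y : V, (y = x ∨ y ∈ S) → r' y = τ := by
    intro y hy
    simp only [hr']
    exact if_pos hy
  have hr'x : r' x = τ := hr'P x (Or.inl rfl)
  have hr'S : ∀ y ∈ S, r' y = τ := fun y hy => hr'P y (Or.inr hy)
  obtain ⟨w0, hw0Y, hw0S⟩ := hw0
  refine TreeRep.node _ m r' ?_ ?_ ?_
  · refine ⟨x, Or.inl rfl, w0, Or.inr hw0Y, ?_⟩
    rw [hr'x, hr'Y w0 hw0Y hw0S]
    exact (hτne w0 hw0Y hw0S).symm
  · intro y1 hy1 y2 hy2 hlt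
    by_cases p1 : y1 = x ∨ y1 ∈ S <;> by_cases p2 : y2 = x ∨ y2 ∈ S
    · exfalso
      rw [hr'P y1 p1, hr'P y2 p2] at hlt
      exact lt_irrefl _ hlt
    · have hy2Y : y2 ∈ Y := by
        rcases Set.mem_insert_iff.mp hy2 with rfl | h
        · exact absurd (Or.inl rfl) p2
        · exact h
      have hy2S : y2 ∉ S := fun h => p2 (Or.inr h)
      have hlt' : τ < 2 * r y2 + 2 := by
        rw [hr'P y1 p1, hr'Y y2 hy2Y hy2S] at hlt
        exact hlt
      have hnA : ¬ φ y2 x = m := by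
        intro h
        have := (hAiff y2 hy2Y hy2S).mp h
        omega
      have hy2B : φ x y2 = m := by
        rcases H0 y2 hy2Y hy2S with h | h
        · exact absurd h hnA
        · exact h
      rcases p1 with rfl | hy1S
      · exact hy2B
      · exact H4 y2 hy2Y hy2S hy2B hnA y1 hy1S
    · have hy1Y : y1 ∈ Y := by
        rcases Set.mem_insert_iff.mp hy1 with rfl | h
        · exact absurd (Or.inl rfl) p1
        · exact h
      have hy1S : y1 ∉ S := fun h => p1 (Or.inr h)
      have hlt' : 2 * r y1 + 2 < τ := by
        rw [hr'Y y1 hy1Y hy1S, hr'P y2 p2] at hlt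
        exact hlt
      have hy1A : φ y1 x = m := (hAiff y1 hy1Y hy1S).mpr hlt'
      rcases p2 with rfl | hy2S
      · exact hy1A
      · exact H3 y1 hy1Y hy1S hy1A y2 hy2S
    · have hy1Y : y1 ∈ Y := by
        rcases Set.mem_insert_iff.mp hy1 with rfl | h
        · exact absurd (Or.inl rfl) p1
        · exact h
      have hy1S : y1 ∉ S := fun h => p1 (Or.inr h)
      have hy2Y : y2 ∈ Y := by
        rcases Set.mem_insert_iff.mp hy2 with rfl | h
        · exact absurd (Or.inl rfl) p2
        · exact h
      have hy2S : y2 ∉ S := fun h => p2 (Or.inr h)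
      refine hcross y1 hy1Y y2 hy2Y ?_
      rw [hr'Y y1 hy1Y hy1S, hr'Y y2 hy2Y hy2S] at hlt
      omega
  · intro t ht
    obtain ⟨y0, hy01, hy02⟩ := ht
    by_cases p0 : y0 = x ∨ y0 ∈ S
    · have hteq : t = τ := by rw [← hy02, hr'P y0 p0]
      rw [hteq]
      have hset : {y ∈ insert x Y | r' y = τ} = insert x S := by
        ext y
        simp only [Set.mem_setOf_eq, Set.mem_insert_iff]
        constructor
        · rintro ⟨hy, hry⟩
          by_cases py : y = x ∨ y ∈ S
          · exact py
          · exfalso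
            have hyY : y ∈ Y := by
              rcases hy with rfl | h
              · exact absurd (Or.inl rfl) py
              · exact h
            have hyS : y ∉ S := fun h => py (Or.inr h)
            rw [hr'Y y hyY hyS] at hry
            exact hτne y hyY hyS hry
        · rintro (rfl | hy)
          · exact ⟨Or.inl rfl, hr'x⟩
          · exact ⟨Or.inr (hSY hy), hr'S y hy⟩
      rw [hset]
      exact hRepY
    · have hy0Y : y0 ∈ Y := by
        rcases hy01 with rfl | h
        · exact absurd (Or.inl rfl) p0
        · exact h
      have hy0S : y0 ∉ S := fun h => p0 (Or.inr h)
      have ht0 : t = 2 * r y0 + 2 := by rw [← hy02, hr'Y y0 hy0Y hy0S]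
      have hset : {y ∈ insert x Y | r' y = t} = {u ∈ Y | r u = r y0} \ S := by
        ext y
        simp only [Set.mem_setOf_eq, Set.mem_insert_iff, Set.mem_diff]
        constructor
        · rintro ⟨hy, hry⟩
          by_cases py : y = x ∨ y ∈ S
          · exfalso
            rw [hr'P y py, ht0] at hry
            exact hτne y0 hy0Y hy0S hry.symm
          · have hyY : y ∈ Y := by
              rcases hy with rfl | h
              · exact absurd (Or.inl rfl) py
              · exact h
            have hyS : y ∉ S := fun h => py (Or.inr h)
            rw [hr'Y y hyY hyS, ht0] at hry
            exact ⟨⟨hyY, by omega⟩, hyS⟩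
        · rintro ⟨⟨hyY, hyr⟩, hyS⟩
          refine ⟨Or.inr hyY, ?_⟩
          rw [hr'Y y hyY hyS, ht0, hyr]
      rw [hset]
      exact hRepF (r y0) ⟨y0, ⟨hy0Y, rfl⟩, hy0S⟩

end constructions

open Classical in
theorem fib01 {x : V} {W : Set V} (hxW : x ∉ W) (hW : TreeRep φ W) :
    ∀ t : ℕ, ({y ∈ insert x W | (if y = x then 0 else 1) = t}).Nonempty →
      TreeRep φ {y ∈ insert x W | (if y = x then 0 else 1) = t} := by
  intro t ht
  by_cases ht0 : t = 0
  · have hset : {y ∈ insert x W | (if y = x then 0 else 1) = t} = {x} := by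
      ext y
      simp only [Set.mem_setOf_eq, Set.mem_insert_iff, Set.mem_singleton_iff]
      constructor
      · rintro ⟨hy, hry⟩
        by_cases hyx : y = x
        · exact hyx
        · rw [if_neg hyx, ht0] at hry
          exact absurd hry one_ne_zero
      · rintro rfl
        exact ⟨Or.inl rfl, by rw [if_pos rfl, ht0]⟩
    rw [hset]
    exact TreeRep.single x
  · by_cases ht1 : t = 1
    · have hset : {y ∈ insert x W | (if y = x then 0 else 1) = t} = W := by
        ext y
        simp only [Set.mem_setOf_eq, Set.mem_insert_iff]
        constructor
        · rintro ⟨hy, hry⟩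
          rcases hy with rfl | hy
          · rw [if_pos rfl, ht1] at hry
            exact absurd hry zero_ne_one
          · exact hy
        · intro hy
          exact ⟨Or.inr hy, by rw [if_neg (fun (hq : y = x) => hxW (hq ▸ hy)), ht1]⟩
      rw [hset]
      exact hW
    · exfalso
      obtain ⟨y0, _, hy02⟩ := ht
      split at hy02 <;> omega

open Classical in
theorem rep_of_su (hrev : Reversible φ) (hU1 : CondU1 φ) (hU2 : CondU2 φ) :
    ∀ n : ℕ, ∀ X : Set V, X.Finite → X.Nonempty → X.ncard ≤ n → TreeRep φ X := by
  intro n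
  induction n with
  | zero =>
    intro X hfin hne hcard
    have := (Set.ncard_pos hfin).mpr hne
    omega
  | succ n IH =>
    intro X hfin hne hcard
    by_cases hle : X.ncard ≤ n
    · exact IH X hfin hne hle
    · have hcard' : X.ncard = n + 1 := by omega
      obtain ⟨x, hx⟩ := hne
      by_cases hn1 : X.ncard = 1
      · obtain ⟨v, rfl⟩ := Set.ncard_eq_one.mp hn1
        exact TreeRep.single v
      · obtain ⟨Y, hYdef⟩ : ∃ Y : Set V, Y = X \ {x} := ⟨_, rfl⟩
        have hxY : x ∉ Y := by
          rw [hYdef]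
          exact fun h => h.2 rfl
        have hYfin : Y.Finite := by
          rw [hYdef]
          exact hfin.diff
        have hYcard : Y.ncard = n := by
          have h1 : Y.ncard = X.ncard - 1 := by
            rw [hYdef]
            exact Set.ncard_diff_singleton_of_mem hx
          omega
        have hYne : Y.Nonempty := Set.nonempty_of_ncard_ne_zero (by omega)
        have hnpos : 1 ≤ n := by
          have := (Set.ncard_pos hYfin).mpr hYne
          omega
        have hXins : insert x Y = X := by
          rw [hYdef, Set.insert_diff_singleton, Set.insert_eq_self.mpr hx]
        have hRY : TreeRep φ Y := IH Y hYfin hYne (le_of_eq hYcard)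
        have hIH1 : ∀ Z : Set V, Z ⊆ Y → Z.Nonempty → TreeRep φ Z := by
          intro Z hZY hZne
          refine IH Z (hYfin.subset hZY) hZne ?_
          have := Set.ncard_le_ncard hZY hYfin
          omega
        have hIH2 : ∀ (Z : Set V) (w : V), w ∈ Y → Z ⊆ Y → w ∉ Z →
            TreeRep φ (insert x Z) := by
          intro Z w hwY hZY hwZ
          have hZsub : Z ⊆ Y \ {w} :=
            fun z hz => ⟨hZY hz, fun hq => hwZ (Set.mem_singleton_iff.mp hq ▸ hz)⟩
          have h1 : Z.ncard ≤ n - 1 := by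
            have h2 := Set.ncard_le_ncard hZsub hYfin.diff
            rw [Set.ncard_diff_singleton_of_mem hwY, hYcard] at h2
            exact h2
          refine IH (insert x Z) ((hYfin.subset hZY).insert x) ⟨x, Set.mem_insert _ _⟩ ?_
          have := Set.ncard_insert_le x Z
          omega
        rw [← hXins]
        cases hRY with
        | single v =>
          have hvY : v ∈ ({v} : Set V) := rfl
          have hxv : x ≠ v := fun h => hxY (h ▸ hvY)
          refine TreeRep.node _ (φ x v) (fun y => if y = x then 0 else 1) ?_ ?_
            (fib01 hxY (TreeRep.single v))
          · refine ⟨x, Set.mem_insert _ _, v, Or.inr rfl, ?_⟩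
            show (if x = x then 0 else 1) ≠ (if v = x then 0 else 1)
            rw [if_pos rfl, if_neg (fun h => hxv h.symm)]
            omega
          · intro a ha b hb hab
            have hab' : (if a = x then (0:ℕ) else 1) < (if b = x then 0 else 1) := hab
            by_cases hax : a = x
            · have hbx : b ≠ x := by
                intro h
                rw [hax, h] at hab'
                exact lt_irrefl _ hab'
              have hbv : b = v := by
                rcases Set.mem_insert_iff.mp hb with h | h
                · exact absurd h hbx
                · exact h
              rw [hax, hbv]
            · exfalso
              rw [if_neg hax] at hab'
              split at hab' <;> omega
        | node Ynode m r hne0 hcross hfib =>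
          obtain ⟨u0, hu0, v0, hv0, huv0⟩ := hne0
          obtain ⟨a0, ha0, b0, hb0, hab0⟩ : ∃ a ∈ Y, ∃ b ∈ Y, r a < r b := by
            rcases Nat.lt_or_ge (r u0) (r v0) with h | h
            · exact ⟨u0, hu0, v0, hv0, h⟩
            · exact ⟨v0, hv0, u0, hu0, by omega⟩
          have hab0ne : a0 ≠ b0 := fun h => hab0.ne (congrArg r h)
          obtain ⟨m', hm'⟩ : ∃ m', φ b0 a0 = m' := ⟨_, rfl⟩
          have hcr0 : φ a0 b0 = m := hcross a0 ha0 b0 hb0 hab0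
          have hto : ∀ a b : V, a ≠ b → φ a b = m → φ b a = m' := by
            intro a b hab h
            rw [← hm']
            exact hrev a b a0 b0 hab hab0ne (h.trans hcr0.symm)
          have hfrom : ∀ a b : V, a ≠ b → φ a b = m' → φ b a = m := by
            intro a b hab h
            rw [← hcr0]
            exact hrev a b b0 a0 hab hab0ne.symm (h.trans hm'.symm)
          have hxne : ∀ u ∈ Y, u ≠ x := fun u hu hq => hxY (hq ▸ hu)
          by_cases hsp : ∃ s ∈ Y, (φ x s ≠ m ∧ φ s x ≠ m) ∧
              ∃ t ∈ Y, (φ x t ≠ m ∧ φ t x ≠ m) ∧ r s ≠ r t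
          · obtain ⟨s0, hs0Y, ⟨hs01, hs02⟩, s1, hs1Y, ⟨hs11, hs12⟩, hs01ne⟩ := hsp
            have pall : ∀ s ∈ Y, φ x s ≠ m → φ s x ≠ m →
                φ x s = φ x s0 ∧ φ s x = φ s0 x := by
              intro s hsY h1 h2
              by_cases hr0 : r s = r s0
              · have hA := lemPC hU1 hU2 hxY hcross hto hfrom hsY hs1Y h1 h2 hs11 hs12
                  (by rw [hr0]; exact hs01ne)
                have hB := lemPC hU1 hU2 hxY hcross hto hfrom hs0Y hs1Y hs01 hs02 hs11 hs12
                  hs01ne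
                exact ⟨hA.1.trans hB.1.symm, hA.2.trans hB.2.symm⟩
              · exact lemPC hU1 hU2 hxY hcross hto hfrom hsY hs0Y h1 h2 hs01 hs02 hr0
            by_cases hYS : ∀ u ∈ Y, φ x u ≠ m ∧ φ u x ≠ m
            · refine TreeRep.node _ (φ x s0) (fun y => if y = x then 0 else 1) ?_ ?_
                (fib01 hxY (TreeRep.node _ m r ⟨u0, hu0, v0, hv0, huv0⟩ hcross hfib))
              · obtain ⟨y0, hy0⟩ := hYne
                refine ⟨x, Set.mem_insert _ _, y0, Or.inr hy0, ?_⟩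
                show (if x = x then 0 else 1) ≠ (if y0 = x then 0 else 1)
                rw [if_pos rfl, if_neg (hxne y0 hy0)]
                omega
              · intro a ha b hb hab
                have hab' : (if a = x then (0:ℕ) else 1) < (if b = x then 0 else 1) := hab
                by_cases hax : a = x
                · have hbx : b ≠ x := by
                    intro h
                    rw [hax, h] at hab'
                    exact lt_irrefl _ hab'
                  have hbY : b ∈ Y := by
                    rcases Set.mem_insert_iff.mp hb with h | h
                    · exact absurd h hbx
                    · exact h
                  rw [hax]
                  exact (pall b hbY (hYS b hbY).1 (hYS b hbY).2).1
                · exfalso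
                  rw [if_neg hax] at hab'
                  split at hab' <;> omega
            · push_neg at hYS
              obtain ⟨w0, hw0Y, hw0S⟩ := hYS
              have hw0S' : ¬ (φ x w0 ≠ m ∧ φ w0 x ≠ m) := by
                intro h
                exact h.2 (hw0S h.1)
              have hw0notS : w0 ∉ {u | u ∈ Y ∧ φ x u ≠ m ∧ φ u x ≠ m} :=
                fun h => hw0S' ⟨h.2.1, h.2.2⟩
              have hpick : ∀ s : V, s ∈ Y → φ x s ≠ m → φ s x ≠ m →
                  ∃ v ∈ Y, (φ x v ≠ m ∧ φ v x ≠ m) ∧ r v ≠ r s ∧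
                    φ x v = φ x s ∧ φ v x = φ s x := by
                intro s hsY h1 h2
                by_cases hv0 : r s0 = r s
                · refine ⟨s1, hs1Y, ⟨hs11, hs12⟩, fun hq => hs01ne (hv0.trans hq.symm), ?_, ?_⟩
                  · exact (pall s1 hs1Y hs11 hs12).1.trans (pall s hsY h1 h2).1.symm
                  · exact (pall s1 hs1Y hs11 hs12).2.trans (pall s hsY h1 h2).2.symm
                · exact ⟨s0, hs0Y, ⟨hs01, hs02⟩, hv0, (pall s hsY h1 h2).1.symm,
                    (pall s hsY h1 h2).2.symm⟩
              refine lemCDelta hxY hYfin hcross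
                (S := {u | u ∈ Y ∧ φ x u ≠ m ∧ φ u x ≠ m})
                (fun u hu => hu.1) ?_ ?_ ?_ ?_ ⟨w0, hw0Y, hw0notS⟩ ?_ ?_
              · intro w hwY hwS
                by_cases h1 : φ w x = m
                · exact Or.inl h1
                · by_cases h2 : φ x w = m
                  · exact Or.inr h2
                  · exact absurd ⟨hwY, h2, h1⟩ hwS
              · intro u huY huS w hwY hwS hum hxwm hwxm
                have hmm' : m' ≠ m := fun hq => hwxm ((hto x w (hxne w hwY).symm hxwm).trans hq)
                rcases Nat.lt_trichotomy (r u) (r w) with h | h | h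
                · exact h
                · exfalso
                  have hle1 : ∀ s ∈ Y, φ x s ≠ m → φ s x ≠ m → r s ≤ r w := by
                    intro s hsY h1 h2
                    by_contra hq
                    exact lemM4 hU1 hxY hcross hto hsY h1 h2 hwY (by omega) hxwm hmm'
                  have hge1 : ∀ s ∈ Y, φ x s ≠ m → φ s x ≠ m → r u ≤ r s := by
                    intro s hsY h1 h2
                    by_contra hq
                    exact lemM3 hU1 hxY hcross hto hsY h1 h2 huY (by omega) hum hmm'
                  have e0 := hle1 s0 hs0Y hs01 hs02
                  have e1 := hle1 s1 hs1Y hs11 hs12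
                  have f0 := hge1 s0 hs0Y hs01 hs02
                  have f1 := hge1 s1 hs1Y hs11 hs12
                  omega
                · exact absurd (lemM1 hU1 hxY hcross hto huY hwY hum hxwm hwxm h) id
              · intro w hwY hwS hwxm s hsS
                obtain ⟨hsY, hs1, hs2⟩ := hsS
                rcases Nat.lt_trichotomy (r w) (r s) with h | h | h
                · exact hcross w hwY s hsY h
                · obtain ⟨v, hvY, ⟨hv1, hv2⟩, hvr, hpv, hqv⟩ := hpick s hsY hs1 hs2
                  have hwsne : w ≠ s := fun hq => hwS (by rw [hq]; exact ⟨hsY, hs1, hs2⟩)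
                  exact lemM6A hU1 hU2 hxY hcross hto hfrom hsY hs1 hs2 hvY hvr hwY h hwsne
                    hpv hqv hwxm (hto w x (hxne w hwY) hwxm)
                · by_cases hmm : m' = m
                  · exact (hto s w (fun hq => h.ne (congrArg r hq)) (hcross s hsY w hwY h)).trans hmm
                  · exact absurd (lemM3 hU1 hxY hcross hto hsY hs1 hs2 hwY h hwxm hmm) id
              · intro w hwY hwS hxwm hwxm s hsS
                obtain ⟨hsY, hs1, hs2⟩ := hsS
                have hmm : m' ≠ m := fun hq => hwxm ((hto x w (hxne w hwY).symm hxwm).trans hq)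
                rcases Nat.lt_trichotomy (r s) (r w) with h | h | h
                · exact hcross s hsY w hwY h
                · obtain ⟨v, hvY, ⟨hv1, hv2⟩, hvr, hpv, hqv⟩ := hpick s hsY hs1 hs2
                  have hwsne : w ≠ s := fun hq => hwS (by rw [hq]; exact ⟨hsY, hs1, hs2⟩)
                  exact lemM6B hU1 hU2 hxY hcross hto hfrom hsY hs1 hs2 hvY hvr hwY h.symm hwsne
                    hpv hqv hxwm (hto x w (hxne w hwY).symm hxwm)
                · exact absurd (lemM4 hU1 hxY hcross hto hsY hs1 hs2 hwY h hxwm hmm) id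
              · exact hIH2 _ w0 hw0Y (fun u hu => hu.1) hw0notS
              · intro t htne
                exact hIH1 _ (fun u hu => hu.1.1) htne
          · by_cases hS : ∃ s ∈ Y, φ x s ≠ m ∧ φ s x ≠ m
            · obtain ⟨s0, hs0Y, hs01, hs02⟩ := hS
              have hnosp : ∀ u ∈ Y, φ x u ≠ m → φ u x ≠ m → r u = r s0 := by
                intro u huY h1 h2
                by_contra hq
                exact hsp ⟨u, huY, ⟨h1, h2⟩, s0, hs0Y, ⟨hs01, hs02⟩, hq⟩
              refine lemCU hxY ⟨u0, hu0, v0, hv0, huv0⟩ hcross hfib (r s0) ?_ ?_ ?_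
              · intro u huY hur
                by_cases h1 : φ u x = m
                · exact h1
                · by_cases h2 : φ x u = m
                  · by_cases hmm : m' = m
                    · exact (hto x u (hxne u huY).symm h2).trans hmm
                    · exact absurd (lemM4 hU1 hxY hcross hto hs0Y hs01 hs02 huY hur h2 hmm) id
                  · exact absurd (hnosp u huY h2 h1) hur.ne
              · intro u huY hur
                by_cases h1 : φ x u = m
                · exact h1
                · by_cases h2 : φ u x = m
                  · by_cases hmm : m' = m
                    · exact (hto u x (hxne u huY) h2).trans hmm
                    · exact absurd (lemM3 hU1 hxY hcross hto hs0Y hs01 hs02 huY hur h2 hmm) id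
                  · exact absurd (hnosp u huY h1 h2) hur.ne'
              · obtain ⟨w1, hw1Y, hw1r⟩ : ∃ w ∈ Y, r w ≠ r s0 := by
                  rcases eq_or_ne (r u0) (r s0) with h | h
                  · exact ⟨v0, hv0, by omega⟩
                  · exact ⟨u0, hu0, h⟩
                exact hIH2 _ w1 hw1Y (fun u hu => hu.1) (fun h => hw1r h.2)
            · have hAB : ∀ u ∈ Y, φ u x = m ∨ φ x u = m := by
                intro u huY
                by_cases h1 : φ u x = m
                · exact Or.inl h1
                · by_cases h2 : φ x u = m
                  · exact Or.inr h2
                  · exact absurd ⟨u, huY, h2, h1⟩ hS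
              by_cases hmm : m' = m
              · refine lemCU hxY ⟨u0, hu0, v0, hv0, huv0⟩ hcross hfib 0
                  (fun u _ h => absurd h (by omega)) ?_ ?_
                · intro u huY _
                  rcases hAB u huY with h | h
                  · exact (hto u x (hxne u huY) h).trans hmm
                  · exact h
                · obtain ⟨w1, hw1Y, hw1r⟩ : ∃ w ∈ Y, r w ≠ 0 := by
                    rcases eq_or_ne (r u0) 0 with h | h
                    · exact ⟨v0, hv0, by omega⟩
                    · exact ⟨u0, hu0, h⟩
                  exact hIH2 _ w1 hw1Y (fun u hu => hu.1) (fun h => hw1r h.2)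
              · by_cases hmx : ∃ u ∈ Y, ∃ w ∈ Y, φ u x = m ∧ φ x w = m ∧ φ w x ≠ m ∧
                    r u = r w
                · obtain ⟨u1, hu1Y, w1, hw1Y, hu1m, hw1m, hw1n, hr1⟩ := hmx
                  refine lemCU hxY ⟨u0, hu0, v0, hv0, huv0⟩ hcross hfib (r u1) ?_ ?_ ?_
                  · intro z hzY hzr
                    rcases hAB z hzY with h | h
                    · exact h
                    · by_cases hz1 : φ z x = m
                      · exact hz1
                      · exact absurd (lemM1 hU1 hxY hcross hto hu1Y hzY hu1m h hz1 hzr) id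
                  · intro z hzY hzr
                    rcases hAB z hzY with h | h
                    · by_cases hz1 : φ x z = m
                      · exact hz1
                      · exact absurd (lemM1 hU1 hxY hcross hto hzY hw1Y h hw1m hw1n
                          (by omega)) id
                    · exact h
                  · obtain ⟨w2, hw2Y, hw2r⟩ : ∃ w ∈ Y, r w ≠ r u1 := by
                      rcases eq_or_ne (r u0) (r u1) with h | h
                      · exact ⟨v0, hv0, by omega⟩
                      · exact ⟨u0, hu0, h⟩
                    exact hIH2 _ w2 hw2Y (fun u hu => hu.1) (fun h => hw2r h.2)
                · refine lemCDelta hxY hYfin hcross (S := (∅ : Set V))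
                    (Set.empty_subset _) ?_ ?_ ?_ ?_ ?_ ?_ ?_
                  · intro w hwY _
                    exact hAB w hwY
                  · intro u huY _ w hwY _ hum hxwm hwxn
                    rcases Nat.lt_trichotomy (r u) (r w) with h | h | h
                    · exact h
                    · exact absurd ⟨u, huY, w, hwY, hum, hxwm, hwxn, h⟩ hmx
                    · exact absurd (lemM1 hU1 hxY hcross hto huY hwY hum hxwm hwxn h) id
                  · intro w _ _ _ s hsS
                    exact absurd hsS (Set.notMem_empty s)
                  · intro w _ _ _ _ s hsS
                    exact absurd hsS (Set.notMem_empty s)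
                  · obtain ⟨y0, hy0⟩ := hYne
                    exact ⟨y0, hy0, Set.notMem_empty y0⟩
                  · have h : insert x (∅ : Set V) = {x} := by simp
                    rw [h]
                    exact TreeRep.single x
                  · intro t htne
                    rw [Set.diff_empty]
                    rw [Set.diff_empty] at htne
                    exact hfib t htne


end dirA



end Aux

/-- Proposition: a reversible 2-structure is uniformly non-prime iff its
associated map `δ_g` is a symbolic ultrametric. -/
theorem reversible_symbolicUltrametric_iff_unp {V Υ : Type*} (φ : V → V → Υ)
    (hrev : Reversible φ) :
    SymbolicUltrametric φ ↔ Unp φ := by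
  constructor
  · intro hSU X h3
    have hfin : X.Finite := by
      by_contra h
      rw [Set.Infinite.ncard (Set.not_infinite.not_right.mp (fun hf => h hf))] at h3
      · omega
    have hne : X.Nonempty := Set.nonempty_of_ncard_ne_zero (by omega)
    exact rep_not_prime hrev h3 (rep_of_su hrev hSU.1 hSU.2 X.ncard X hfin hne le_rfl)
  · exact unp_to_su
end

section
/- Let g be a 2-structure satisfying (U2). Then every monochromatic digraph G_i(g) (i ∈ Υ) is a di-cograph if and only if every monochromatic digraph G_j(rev(g)) (j ∈ Υ_rev(g)) of the reversible refinement is a di-cograph. -/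
section AuxProofs

lemma inj3_s14 {V : Type*} {x y z : V} (hxy : x ≠ y) (hxz : x ≠ z) (hyz : y ≠ z) :
    Function.Injective ![x, y, z] := by
  intro a b hab; fin_cases a <;> fin_cases b <;> simp_all

lemma inj4_s14 {V : Type*} {x y z w : V} (h1 : x ≠ y) (h2 : x ≠ z) (h3 : x ≠ w)
    (h4 : y ≠ z) (h5 : y ≠ w) (h6 : z ≠ w) :
    Function.Injective ![x, y, z, w] := by
  intro a b hab; fin_cases a <;> fin_cases b <;> simp_all

lemma hasD3_iff {V Υ : Type*} (ψ : V → V → Υ) (c : Υ) :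
    HasInducedCopy (Ggraph ψ c) FD3 ↔
    ∃ x0 x1 x2 : V, x0 ≠ x1 ∧ x0 ≠ x2 ∧ x1 ≠ x2 ∧ ψ x0 x1 = c ∧ ψ x0 x2 ≠ c ∧ ψ x1 x0 ≠ c ∧ ψ x1 x2 = c ∧ ψ x2 x0 ≠ c ∧ ψ x2 x1 ≠ c := by
  constructor
  · rintro ⟨ι, hinj, h⟩
    have n01 : ι 0 ≠ ι 1 := fun hh => by have := hinj hh; simp_all
    have n02 : ι 0 ≠ ι 2 := fun hh => by have := hinj hh; simp_all
    have n12 : ι 1 ≠ ι 2 := fun hh => by have := hinj hh; simp_all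
    have a01 : ψ (ι 0) (ι 1) = c := ((h 0 1 (by decide)).mpr (by unfold FD3 relOf; decide)).2
    have a02 : ψ (ι 0) (ι 2) ≠ c := fun hc => (by unfold FD3 relOf; decide : ¬ FD3 0 2) ((h 0 2 (by decide)).mp ⟨n02, hc⟩)
    have a10 : ψ (ι 1) (ι 0) ≠ c := fun hc => (by unfold FD3 relOf; decide : ¬ FD3 1 0) ((h 1 0 (by decide)).mp ⟨n01.symm, hc⟩)
    have a12 : ψ (ι 1) (ι 2) = c := ((h 1 2 (by decide)).mpr (by unfold FD3 relOf; decide)).2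
    have a20 : ψ (ι 2) (ι 0) ≠ c := fun hc => (by unfold FD3 relOf; decide : ¬ FD3 2 0) ((h 2 0 (by decide)).mp ⟨n02.symm, hc⟩)
    have a21 : ψ (ι 2) (ι 1) ≠ c := fun hc => (by unfold FD3 relOf; decide : ¬ FD3 2 1) ((h 2 1 (by decide)).mp ⟨n12.symm, hc⟩)
    exact ⟨ι 0, ι 1, ι 2, n01, n02, n12, a01, a02, a10, a12, a20, a21⟩
  · rintro ⟨x0, x1, x2, d01, d02, d12, h01, h02, h10, h12, h20, h21⟩
    refine ⟨![x0, x1, x2], inj3_s14 d01 d02 d12, ?_⟩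
    intro k l hkl
    fin_cases k <;> fin_cases l
    · exact absurd rfl hkl
    · exact iff_of_true ⟨d01, h01⟩ (by unfold FD3 relOf; decide)
    · exact iff_of_false (fun hc => h02 hc.2) (by unfold FD3 relOf; decide)
    · exact iff_of_false (fun hc => h10 hc.2) (by unfold FD3 relOf; decide)
    · exact absurd rfl hkl
    · exact iff_of_true ⟨d12, h12⟩ (by unfold FD3 relOf; decide)
    · exact iff_of_false (fun hc => h20 hc.2) (by unfold FD3 relOf; decide)
    · exact iff_of_false (fun hc => h21 hc.2) (by unfold FD3 relOf; decide)
    · exact absurd rfl hkl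

lemma hasA_iff {V Υ : Type*} (ψ : V → V → Υ) (c : Υ) :
    HasInducedCopy (Ggraph ψ c) FA ↔
    ∃ x0 x1 x2 : V, x0 ≠ x1 ∧ x0 ≠ x2 ∧ x1 ≠ x2 ∧ ψ x0 x1 = c ∧ ψ x0 x2 ≠ c ∧ ψ x1 x0 ≠ c ∧ ψ x1 x2 = c ∧ ψ x2 x0 ≠ c ∧ ψ x2 x1 = c := by
  constructor
  · rintro ⟨ι, hinj, h⟩
    have n01 : ι 0 ≠ ι 1 := fun hh => by have := hinj hh; simp_all
    have n02 : ι 0 ≠ ι 2 := fun hh => by have := hinj hh; simp_all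
    have n12 : ι 1 ≠ ι 2 := fun hh => by have := hinj hh; simp_all
    have a01 : ψ (ι 0) (ι 1) = c := ((h 0 1 (by decide)).mpr (by unfold FA relOf; decide)).2
    have a02 : ψ (ι 0) (ι 2) ≠ c := fun hc => (by unfold FA relOf; decide : ¬ FA 0 2) ((h 0 2 (by decide)).mp ⟨n02, hc⟩)
    have a10 : ψ (ι 1) (ι 0) ≠ c := fun hc => (by unfold FA relOf; decide : ¬ FA 1 0) ((h 1 0 (by decide)).mp ⟨n01.symm, hc⟩)
    have a12 : ψ (ι 1) (ι 2) = c := ((h 1 2 (by decide)).mpr (by unfold FA relOf; decide)).2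
    have a20 : ψ (ι 2) (ι 0) ≠ c := fun hc => (by unfold FA relOf; decide : ¬ FA 2 0) ((h 2 0 (by decide)).mp ⟨n02.symm, hc⟩)
    have a21 : ψ (ι 2) (ι 1) = c := ((h 2 1 (by decide)).mpr (by unfold FA relOf; decide)).2
    exact ⟨ι 0, ι 1, ι 2, n01, n02, n12, a01, a02, a10, a12, a20, a21⟩
  · rintro ⟨x0, x1, x2, d01, d02, d12, h01, h02, h10, h12, h20, h21⟩
    refine ⟨![x0, x1, x2], inj3_s14 d01 d02 d12, ?_⟩
    intro k l hkl
    fin_cases k <;> fin_cases l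
    · exact absurd rfl hkl
    · exact iff_of_true ⟨d01, h01⟩ (by unfold FA relOf; decide)
    · exact iff_of_false (fun hc => h02 hc.2) (by unfold FA relOf; decide)
    · exact iff_of_false (fun hc => h10 hc.2) (by unfold FA relOf; decide)
    · exact absurd rfl hkl
    · exact iff_of_true ⟨d12, h12⟩ (by unfold FA relOf; decide)
    · exact iff_of_false (fun hc => h20 hc.2) (by unfold FA relOf; decide)
    · exact iff_of_true ⟨d12.symm, h21⟩ (by unfold FA relOf; decide)
    · exact absurd rfl hkl

lemma hasB_iff {V Υ : Type*} (ψ : V → V → Υ) (c : Υ) :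
    HasInducedCopy (Ggraph ψ c) FB ↔
    ∃ x0 x1 x2 : V, x0 ≠ x1 ∧ x0 ≠ x2 ∧ x1 ≠ x2 ∧ ψ x0 x1 = c ∧ ψ x0 x2 ≠ c ∧ ψ x1 x0 = c ∧ ψ x1 x2 = c ∧ ψ x2 x0 ≠ c ∧ ψ x2 x1 ≠ c := by
  constructor
  · rintro ⟨ι, hinj, h⟩
    have n01 : ι 0 ≠ ι 1 := fun hh => by have := hinj hh; simp_all
    have n02 : ι 0 ≠ ι 2 := fun hh => by have := hinj hh; simp_all
    have n12 : ι 1 ≠ ι 2 := fun hh => by have := hinj hh; simp_all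
    have a01 : ψ (ι 0) (ι 1) = c := ((h 0 1 (by decide)).mpr (by unfold FB relOf; decide)).2
    have a02 : ψ (ι 0) (ι 2) ≠ c := fun hc => (by unfold FB relOf; decide : ¬ FB 0 2) ((h 0 2 (by decide)).mp ⟨n02, hc⟩)
    have a10 : ψ (ι 1) (ι 0) = c := ((h 1 0 (by decide)).mpr (by unfold FB relOf; decide)).2
    have a12 : ψ (ι 1) (ι 2) = c := ((h 1 2 (by decide)).mpr (by unfold FB relOf; decide)).2
    have a20 : ψ (ι 2) (ι 0) ≠ c := fun hc => (by unfold FB relOf; decide : ¬ FB 2 0) ((h 2 0 (by decide)).mp ⟨n02.symm, hc⟩)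
    have a21 : ψ (ι 2) (ι 1) ≠ c := fun hc => (by unfold FB relOf; decide : ¬ FB 2 1) ((h 2 1 (by decide)).mp ⟨n12.symm, hc⟩)
    exact ⟨ι 0, ι 1, ι 2, n01, n02, n12, a01, a02, a10, a12, a20, a21⟩
  · rintro ⟨x0, x1, x2, d01, d02, d12, h01, h02, h10, h12, h20, h21⟩
    refine ⟨![x0, x1, x2], inj3_s14 d01 d02 d12, ?_⟩
    intro k l hkl
    fin_cases k <;> fin_cases l
    · exact absurd rfl hkl
    · exact iff_of_true ⟨d01, h01⟩ (by unfold FB relOf; decide)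
    · exact iff_of_false (fun hc => h02 hc.2) (by unfold FB relOf; decide)
    · exact iff_of_true ⟨d01.symm, h10⟩ (by unfold FB relOf; decide)
    · exact absurd rfl hkl
    · exact iff_of_true ⟨d12, h12⟩ (by unfold FB relOf; decide)
    · exact iff_of_false (fun hc => h20 hc.2) (by unfold FB relOf; decide)
    · exact iff_of_false (fun hc => h21 hc.2) (by unfold FB relOf; decide)
    · exact absurd rfl hkl

lemma hasD3c_iff {V Υ : Type*} (ψ : V → V → Υ) (c : Υ) :
    HasInducedCopy (Ggraph ψ c) FD3c ↔
    ∃ x0 x1 x2 : V, x0 ≠ x1 ∧ x0 ≠ x2 ∧ x1 ≠ x2 ∧ ψ x0 x1 ≠ c ∧ ψ x0 x2 = c ∧ ψ x1 x0 = c ∧ ψ x1 x2 ≠ c ∧ ψ x2 x0 = c ∧ ψ x2 x1 = c := by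
  constructor
  · rintro ⟨ι, hinj, h⟩
    have n01 : ι 0 ≠ ι 1 := fun hh => by have := hinj hh; simp_all
    have n02 : ι 0 ≠ ι 2 := fun hh => by have := hinj hh; simp_all
    have n12 : ι 1 ≠ ι 2 := fun hh => by have := hinj hh; simp_all
    have a01 : ψ (ι 0) (ι 1) ≠ c := fun hc => (by unfold FD3c relOf; decide : ¬ FD3c 0 1) ((h 0 1 (by decide)).mp ⟨n01, hc⟩)
    have a02 : ψ (ι 0) (ι 2) = c := ((h 0 2 (by decide)).mpr (by unfold FD3c relOf; decide)).2
    have a10 : ψ (ι 1) (ι 0) = c := ((h 1 0 (by decide)).mpr (by unfold FD3c relOf; decide)).2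
    have a12 : ψ (ι 1) (ι 2) ≠ c := fun hc => (by unfold FD3c relOf; decide : ¬ FD3c 1 2) ((h 1 2 (by decide)).mp ⟨n12, hc⟩)
    have a20 : ψ (ι 2) (ι 0) = c := ((h 2 0 (by decide)).mpr (by unfold FD3c relOf; decide)).2
    have a21 : ψ (ι 2) (ι 1) = c := ((h 2 1 (by decide)).mpr (by unfold FD3c relOf; decide)).2
    exact ⟨ι 0, ι 1, ι 2, n01, n02, n12, a01, a02, a10, a12, a20, a21⟩
  · rintro ⟨x0, x1, x2, d01, d02, d12, h01, h02, h10, h12, h20, h21⟩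
    refine ⟨![x0, x1, x2], inj3_s14 d01 d02 d12, ?_⟩
    intro k l hkl
    fin_cases k <;> fin_cases l
    · exact absurd rfl hkl
    · exact iff_of_false (fun hc => h01 hc.2) (by unfold FD3c relOf; decide)
    · exact iff_of_true ⟨d02, h02⟩ (by unfold FD3c relOf; decide)
    · exact iff_of_true ⟨d01.symm, h10⟩ (by unfold FD3c relOf; decide)
    · exact absurd rfl hkl
    · exact iff_of_false (fun hc => h12 hc.2) (by unfold FD3c relOf; decide)
    · exact iff_of_true ⟨d02.symm, h20⟩ (by unfold FD3c relOf; decide)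
    · exact iff_of_true ⟨d12.symm, h21⟩ (by unfold FD3c relOf; decide)
    · exact absurd rfl hkl

lemma hasC3_iff {V Υ : Type*} (ψ : V → V → Υ) (c : Υ) :
    HasInducedCopy (Ggraph ψ c) FC3 ↔
    ∃ x0 x1 x2 : V, x0 ≠ x1 ∧ x0 ≠ x2 ∧ x1 ≠ x2 ∧ ψ x0 x1 = c ∧ ψ x0 x2 ≠ c ∧ ψ x1 x0 ≠ c ∧ ψ x1 x2 = c ∧ ψ x2 x0 = c ∧ ψ x2 x1 ≠ c := by
  constructor
  · rintro ⟨ι, hinj, h⟩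
    have n01 : ι 0 ≠ ι 1 := fun hh => by have := hinj hh; simp_all
    have n02 : ι 0 ≠ ι 2 := fun hh => by have := hinj hh; simp_all
    have n12 : ι 1 ≠ ι 2 := fun hh => by have := hinj hh; simp_all
    have a01 : ψ (ι 0) (ι 1) = c := ((h 0 1 (by decide)).mpr (by unfold FC3 relOf; decide)).2
    have a02 : ψ (ι 0) (ι 2) ≠ c := fun hc => (by unfold FC3 relOf; decide : ¬ FC3 0 2) ((h 0 2 (by decide)).mp ⟨n02, hc⟩)
    have a10 : ψ (ι 1) (ι 0) ≠ c := fun hc => (by unfold FC3 relOf; decide : ¬ FC3 1 0) ((h 1 0 (by decide)).mp ⟨n01.symm, hc⟩)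
    have a12 : ψ (ι 1) (ι 2) = c := ((h 1 2 (by decide)).mpr (by unfold FC3 relOf; decide)).2
    have a20 : ψ (ι 2) (ι 0) = c := ((h 2 0 (by decide)).mpr (by unfold FC3 relOf; decide)).2
    have a21 : ψ (ι 2) (ι 1) ≠ c := fun hc => (by unfold FC3 relOf; decide : ¬ FC3 2 1) ((h 2 1 (by decide)).mp ⟨n12.symm, hc⟩)
    exact ⟨ι 0, ι 1, ι 2, n01, n02, n12, a01, a02, a10, a12, a20, a21⟩
  · rintro ⟨x0, x1, x2, d01, d02, d12, h01, h02, h10, h12, h20, h21⟩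
    refine ⟨![x0, x1, x2], inj3_s14 d01 d02 d12, ?_⟩
    intro k l hkl
    fin_cases k <;> fin_cases l
    · exact absurd rfl hkl
    · exact iff_of_true ⟨d01, h01⟩ (by unfold FC3 relOf; decide)
    · exact iff_of_false (fun hc => h02 hc.2) (by unfold FC3 relOf; decide)
    · exact iff_of_false (fun hc => h10 hc.2) (by unfold FC3 relOf; decide)
    · exact absurd rfl hkl
    · exact iff_of_true ⟨d12, h12⟩ (by unfold FC3 relOf; decide)
    · exact iff_of_true ⟨d02.symm, h20⟩ (by unfold FC3 relOf; decide)
    · exact iff_of_false (fun hc => h21 hc.2) (by unfold FC3 relOf; decide)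
    · exact absurd rfl hkl

lemma hasN_iff {V Υ : Type*} (ψ : V → V → Υ) (c : Υ) :
    HasInducedCopy (Ggraph ψ c) FN ↔
    ∃ x0 x1 x2 x3 : V, x0 ≠ x1 ∧ x0 ≠ x2 ∧ x0 ≠ x3 ∧ x1 ≠ x2 ∧ x1 ≠ x3 ∧ x2 ≠ x3 ∧ ψ x0 x1 ≠ c ∧ ψ x0 x2 ≠ c ∧ ψ x0 x3 ≠ c ∧ ψ x1 x0 = c ∧ ψ x1 x2 = c ∧ ψ x1 x3 ≠ c ∧ ψ x2 x0 ≠ c ∧ ψ x2 x1 ≠ c ∧ ψ x2 x3 ≠ c ∧ ψ x3 x0 ≠ c ∧ ψ x3 x1 ≠ c ∧ ψ x3 x2 = c := by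
  constructor
  · rintro ⟨ι, hinj, h⟩
    have n01 : ι 0 ≠ ι 1 := fun hh => by have := hinj hh; simp_all
    have n02 : ι 0 ≠ ι 2 := fun hh => by have := hinj hh; simp_all
    have n03 : ι 0 ≠ ι 3 := fun hh => by have := hinj hh; simp_all
    have n12 : ι 1 ≠ ι 2 := fun hh => by have := hinj hh; simp_all
    have n13 : ι 1 ≠ ι 3 := fun hh => by have := hinj hh; simp_all
    have n23 : ι 2 ≠ ι 3 := fun hh => by have := hinj hh; simp_all
    have a01 : ψ (ι 0) (ι 1) ≠ c := fun hc => (by unfold FN relOf; decide : ¬ FN 0 1) ((h 0 1 (by decide)).mp ⟨n01, hc⟩)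
    have a02 : ψ (ι 0) (ι 2) ≠ c := fun hc => (by unfold FN relOf; decide : ¬ FN 0 2) ((h 0 2 (by decide)).mp ⟨n02, hc⟩)
    have a03 : ψ (ι 0) (ι 3) ≠ c := fun hc => (by unfold FN relOf; decide : ¬ FN 0 3) ((h 0 3 (by decide)).mp ⟨n03, hc⟩)
    have a10 : ψ (ι 1) (ι 0) = c := ((h 1 0 (by decide)).mpr (by unfold FN relOf; decide)).2
    have a12 : ψ (ι 1) (ι 2) = c := ((h 1 2 (by decide)).mpr (by unfold FN relOf; decide)).2
    have a13 : ψ (ι 1) (ι 3) ≠ c := fun hc => (by unfold FN relOf; decide : ¬ FN 1 3) ((h 1 3 (by decide)).mp ⟨n13, hc⟩)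
    have a20 : ψ (ι 2) (ι 0) ≠ c := fun hc => (by unfold FN relOf; decide : ¬ FN 2 0) ((h 2 0 (by decide)).mp ⟨n02.symm, hc⟩)
    have a21 : ψ (ι 2) (ι 1) ≠ c := fun hc => (by unfold FN relOf; decide : ¬ FN 2 1) ((h 2 1 (by decide)).mp ⟨n12.symm, hc⟩)
    have a23 : ψ (ι 2) (ι 3) ≠ c := fun hc => (by unfold FN relOf; decide : ¬ FN 2 3) ((h 2 3 (by decide)).mp ⟨n23, hc⟩)
    have a30 : ψ (ι 3) (ι 0) ≠ c := fun hc => (by unfold FN relOf; decide : ¬ FN 3 0) ((h 3 0 (by decide)).mp ⟨n03.symm, hc⟩)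
    have a31 : ψ (ι 3) (ι 1) ≠ c := fun hc => (by unfold FN relOf; decide : ¬ FN 3 1) ((h 3 1 (by decide)).mp ⟨n13.symm, hc⟩)
    have a32 : ψ (ι 3) (ι 2) = c := ((h 3 2 (by decide)).mpr (by unfold FN relOf; decide)).2
    exact ⟨ι 0, ι 1, ι 2, ι 3, n01, n02, n03, n12, n13, n23, a01, a02, a03, a10, a12, a13, a20, a21, a23, a30, a31, a32⟩
  · rintro ⟨x0, x1, x2, x3, d01, d02, d03, d12, d13, d23, h01, h02, h03, h10, h12, h13, h20, h21, h23, h30, h31, h32⟩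
    refine ⟨![x0, x1, x2, x3], inj4_s14 d01 d02 d03 d12 d13 d23, ?_⟩
    intro k l hkl
    fin_cases k <;> fin_cases l
    · exact absurd rfl hkl
    · exact iff_of_false (fun hc => h01 hc.2) (by unfold FN relOf; decide)
    · exact iff_of_false (fun hc => h02 hc.2) (by unfold FN relOf; decide)
    · exact iff_of_false (fun hc => h03 hc.2) (by unfold FN relOf; decide)
    · exact iff_of_true ⟨d01.symm, h10⟩ (by unfold FN relOf; decide)
    · exact absurd rfl hkl
    · exact iff_of_true ⟨d12, h12⟩ (by unfold FN relOf; decide)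
    · exact iff_of_false (fun hc => h13 hc.2) (by unfold FN relOf; decide)
    · exact iff_of_false (fun hc => h20 hc.2) (by unfold FN relOf; decide)
    · exact iff_of_false (fun hc => h21 hc.2) (by unfold FN relOf; decide)
    · exact absurd rfl hkl
    · exact iff_of_false (fun hc => h23 hc.2) (by unfold FN relOf; decide)
    · exact iff_of_false (fun hc => h30 hc.2) (by unfold FN relOf; decide)
    · exact iff_of_false (fun hc => h31 hc.2) (by unfold FN relOf; decide)
    · exact iff_of_true ⟨d23.symm, h32⟩ (by unfold FN relOf; decide)
    · exact absurd rfl hkl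

lemma hasNc_iff {V Υ : Type*} (ψ : V → V → Υ) (c : Υ) :
    HasInducedCopy (Ggraph ψ c) FNc ↔
    ∃ x0 x1 x2 x3 : V, x0 ≠ x1 ∧ x0 ≠ x2 ∧ x0 ≠ x3 ∧ x1 ≠ x2 ∧ x1 ≠ x3 ∧ x2 ≠ x3 ∧ ψ x0 x1 = c ∧ ψ x0 x2 = c ∧ ψ x0 x3 = c ∧ ψ x1 x0 ≠ c ∧ ψ x1 x2 ≠ c ∧ ψ x1 x3 = c ∧ ψ x2 x0 = c ∧ ψ x2 x1 = c ∧ ψ x2 x3 = c ∧ ψ x3 x0 = c ∧ ψ x3 x1 = c ∧ ψ x3 x2 ≠ c := by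
  constructor
  · rintro ⟨ι, hinj, h⟩
    have n01 : ι 0 ≠ ι 1 := fun hh => by have := hinj hh; simp_all
    have n02 : ι 0 ≠ ι 2 := fun hh => by have := hinj hh; simp_all
    have n03 : ι 0 ≠ ι 3 := fun hh => by have := hinj hh; simp_all
    have n12 : ι 1 ≠ ι 2 := fun hh => by have := hinj hh; simp_all
    have n13 : ι 1 ≠ ι 3 := fun hh => by have := hinj hh; simp_all
    have n23 : ι 2 ≠ ι 3 := fun hh => by have := hinj hh; simp_all
    have a01 : ψ (ι 0) (ι 1) = c := ((h 0 1 (by decide)).mpr (by unfold FNc relOf; decide)).2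
    have a02 : ψ (ι 0) (ι 2) = c := ((h 0 2 (by decide)).mpr (by unfold FNc relOf; decide)).2
    have a03 : ψ (ι 0) (ι 3) = c := ((h 0 3 (by decide)).mpr (by unfold FNc relOf; decide)).2
    have a10 : ψ (ι 1) (ι 0) ≠ c := fun hc => (by unfold FNc relOf; decide : ¬ FNc 1 0) ((h 1 0 (by decide)).mp ⟨n01.symm, hc⟩)
    have a12 : ψ (ι 1) (ι 2) ≠ c := fun hc => (by unfold FNc relOf; decide : ¬ FNc 1 2) ((h 1 2 (by decide)).mp ⟨n12, hc⟩)
    have a13 : ψ (ι 1) (ι 3) = c := ((h 1 3 (by decide)).mpr (by unfold FNc relOf; decide)).2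
    have a20 : ψ (ι 2) (ι 0) = c := ((h 2 0 (by decide)).mpr (by unfold FNc relOf; decide)).2
    have a21 : ψ (ι 2) (ι 1) = c := ((h 2 1 (by decide)).mpr (by unfold FNc relOf; decide)).2
    have a23 : ψ (ι 2) (ι 3) = c := ((h 2 3 (by decide)).mpr (by unfold FNc relOf; decide)).2
    have a30 : ψ (ι 3) (ι 0) = c := ((h 3 0 (by decide)).mpr (by unfold FNc relOf; decide)).2
    have a31 : ψ (ι 3) (ι 1) = c := ((h 3 1 (by decide)).mpr (by unfold FNc relOf; decide)).2
    have a32 : ψ (ι 3) (ι 2) ≠ c := fun hc => (by unfold FNc relOf; decide : ¬ FNc 3 2) ((h 3 2 (by decide)).mp ⟨n23.symm, hc⟩)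
    exact ⟨ι 0, ι 1, ι 2, ι 3, n01, n02, n03, n12, n13, n23, a01, a02, a03, a10, a12, a13, a20, a21, a23, a30, a31, a32⟩
  · rintro ⟨x0, x1, x2, x3, d01, d02, d03, d12, d13, d23, h01, h02, h03, h10, h12, h13, h20, h21, h23, h30, h31, h32⟩
    refine ⟨![x0, x1, x2, x3], inj4_s14 d01 d02 d03 d12 d13 d23, ?_⟩
    intro k l hkl
    fin_cases k <;> fin_cases l
    · exact absurd rfl hkl
    · exact iff_of_true ⟨d01, h01⟩ (by unfold FNc relOf; decide)
    · exact iff_of_true ⟨d02, h02⟩ (by unfold FNc relOf; decide)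
    · exact iff_of_true ⟨d03, h03⟩ (by unfold FNc relOf; decide)
    · exact iff_of_false (fun hc => h10 hc.2) (by unfold FNc relOf; decide)
    · exact absurd rfl hkl
    · exact iff_of_false (fun hc => h12 hc.2) (by unfold FNc relOf; decide)
    · exact iff_of_true ⟨d13, h13⟩ (by unfold FNc relOf; decide)
    · exact iff_of_true ⟨d02.symm, h20⟩ (by unfold FNc relOf; decide)
    · exact iff_of_true ⟨d12.symm, h21⟩ (by unfold FNc relOf; decide)
    · exact absurd rfl hkl
    · exact iff_of_true ⟨d23, h23⟩ (by unfold FNc relOf; decide)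
    · exact iff_of_true ⟨d03.symm, h30⟩ (by unfold FNc relOf; decide)
    · exact iff_of_true ⟨d13.symm, h31⟩ (by unfold FNc relOf; decide)
    · exact iff_of_false (fun hc => h32 hc.2) (by unfold FNc relOf; decide)
    · exact absurd rfl hkl

lemma hasP4_iff {V Υ : Type*} (ψ : V → V → Υ) (c : Υ) :
    HasInducedCopy (Ggraph ψ c) FP4 ↔
    ∃ x0 x1 x2 x3 : V, x0 ≠ x1 ∧ x0 ≠ x2 ∧ x0 ≠ x3 ∧ x1 ≠ x2 ∧ x1 ≠ x3 ∧ x2 ≠ x3 ∧ ψ x0 x1 = c ∧ ψ x0 x2 ≠ c ∧ ψ x0 x3 ≠ c ∧ ψ x1 x0 = c ∧ ψ x1 x2 = c ∧ ψ x1 x3 ≠ c ∧ ψ x2 x0 ≠ c ∧ ψ x2 x1 = c ∧ ψ x2 x3 = c ∧ ψ x3 x0 ≠ c ∧ ψ x3 x1 ≠ c ∧ ψ x3 x2 = c := by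
  constructor
  · rintro ⟨ι, hinj, h⟩
    have n01 : ι 0 ≠ ι 1 := fun hh => by have := hinj hh; simp_all
    have n02 : ι 0 ≠ ι 2 := fun hh => by have := hinj hh; simp_all
    have n03 : ι 0 ≠ ι 3 := fun hh => by have := hinj hh; simp_all
    have n12 : ι 1 ≠ ι 2 := fun hh => by have := hinj hh; simp_all
    have n13 : ι 1 ≠ ι 3 := fun hh => by have := hinj hh; simp_all
    have n23 : ι 2 ≠ ι 3 := fun hh => by have := hinj hh; simp_all
    have a01 : ψ (ι 0) (ι 1) = c := ((h 0 1 (by decide)).mpr (by unfold FP4 relOf; decide)).2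
    have a02 : ψ (ι 0) (ι 2) ≠ c := fun hc => (by unfold FP4 relOf; decide : ¬ FP4 0 2) ((h 0 2 (by decide)).mp ⟨n02, hc⟩)
    have a03 : ψ (ι 0) (ι 3) ≠ c := fun hc => (by unfold FP4 relOf; decide : ¬ FP4 0 3) ((h 0 3 (by decide)).mp ⟨n03, hc⟩)
    have a10 : ψ (ι 1) (ι 0) = c := ((h 1 0 (by decide)).mpr (by unfold FP4 relOf; decide)).2
    have a12 : ψ (ι 1) (ι 2) = c := ((h 1 2 (by decide)).mpr (by unfold FP4 relOf; decide)).2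
    have a13 : ψ (ι 1) (ι 3) ≠ c := fun hc => (by unfold FP4 relOf; decide : ¬ FP4 1 3) ((h 1 3 (by decide)).mp ⟨n13, hc⟩)
    have a20 : ψ (ι 2) (ι 0) ≠ c := fun hc => (by unfold FP4 relOf; decide : ¬ FP4 2 0) ((h 2 0 (by decide)).mp ⟨n02.symm, hc⟩)
    have a21 : ψ (ι 2) (ι 1) = c := ((h 2 1 (by decide)).mpr (by unfold FP4 relOf; decide)).2
    have a23 : ψ (ι 2) (ι 3) = c := ((h 2 3 (by decide)).mpr (by unfold FP4 relOf; decide)).2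
    have a30 : ψ (ι 3) (ι 0) ≠ c := fun hc => (by unfold FP4 relOf; decide : ¬ FP4 3 0) ((h 3 0 (by decide)).mp ⟨n03.symm, hc⟩)
    have a31 : ψ (ι 3) (ι 1) ≠ c := fun hc => (by unfold FP4 relOf; decide : ¬ FP4 3 1) ((h 3 1 (by decide)).mp ⟨n13.symm, hc⟩)
    have a32 : ψ (ι 3) (ι 2) = c := ((h 3 2 (by decide)).mpr (by unfold FP4 relOf; decide)).2
    exact ⟨ι 0, ι 1, ι 2, ι 3, n01, n02, n03, n12, n13, n23, a01, a02, a03, a10, a12, a13, a20, a21, a23, a30, a31, a32⟩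
  · rintro ⟨x0, x1, x2, x3, d01, d02, d03, d12, d13, d23, h01, h02, h03, h10, h12, h13, h20, h21, h23, h30, h31, h32⟩
    refine ⟨![x0, x1, x2, x3], inj4_s14 d01 d02 d03 d12 d13 d23, ?_⟩
    intro k l hkl
    fin_cases k <;> fin_cases l
    · exact absurd rfl hkl
    · exact iff_of_true ⟨d01, h01⟩ (by unfold FP4 relOf; decide)
    · exact iff_of_false (fun hc => h02 hc.2) (by unfold FP4 relOf; decide)
    · exact iff_of_false (fun hc => h03 hc.2) (by unfold FP4 relOf; decide)
    · exact iff_of_true ⟨d01.symm, h10⟩ (by unfold FP4 relOf; decide)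
    · exact absurd rfl hkl
    · exact iff_of_true ⟨d12, h12⟩ (by unfold FP4 relOf; decide)
    · exact iff_of_false (fun hc => h13 hc.2) (by unfold FP4 relOf; decide)
    · exact iff_of_false (fun hc => h20 hc.2) (by unfold FP4 relOf; decide)
    · exact iff_of_true ⟨d12.symm, h21⟩ (by unfold FP4 relOf; decide)
    · exact absurd rfl hkl
    · exact iff_of_true ⟨d23, h23⟩ (by unfold FP4 relOf; decide)
    · exact iff_of_false (fun hc => h30 hc.2) (by unfold FP4 relOf; decide)
    · exact iff_of_false (fun hc => h31 hc.2) (by unfold FP4 relOf; decide)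
    · exact iff_of_true ⟨d23.symm, h32⟩ (by unfold FP4 relOf; decide)
    · exact absurd rfl hkl
section Helpers
variable {V Υ : Type*} {φ : V → V → Υ} {u v : V} {i j : Υ}

lemma req (h1 : φ u v = i) (h2 : φ v u = j) : revMap φ u v = (i, j) := by
  simp only [revMap, Prod.mk.injEq]; exact ⟨h1, h2⟩
lemma rne1 (h : φ u v ≠ i) : revMap φ u v ≠ (i, j) :=
  fun hh => h (congrArg Prod.fst hh)
lemma rne2 (h : φ v u ≠ j) : revMap φ u v ≠ (i, j) :=
  fun hh => h (congrArg Prod.snd hh)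
lemma rfst (h : revMap φ u v = (i, j)) : φ u v = i := congrArg Prod.fst h
lemma rsnd (h : revMap φ u v = (i, j)) : φ v u = j := congrArg Prod.snd h
lemma rnd (h : revMap φ u v ≠ (i, j)) (h1 : φ u v = i) (h2 : φ v u = j) : False :=
  h (req h1 h2)

lemma triple_cases {α : Type*} {A B C : α} (h : ({A, B, C} : Set α).ncard ≤ 2) :
    A = B ∨ A = C ∨ B = C := by
  by_contra hc
  push_neg at hc
  obtain ⟨h1, h2, h3⟩ := hc
  have : ({A, B, C} : Set α).ncard = 3 := by
    rw [Set.ncard_insert_of_notMem (by simp [h1, h2]) ((Set.finite_singleton C).insert B),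
        Set.ncard_pair h3]
  omega

lemma dset_eq {a b c d : V} (h : Dset φ a b = Dset φ c d) :
    (φ a b = φ c d ∧ φ b a = φ d c) ∨ (φ a b = φ d c ∧ φ b a = φ c d) :=
  Set.pair_eq_pair_iff.mp h

lemma u2_cases (hU2 : CondU2 φ) {x y z : V} (hxy : x ≠ y) (hxz : x ≠ z) (hyz : y ≠ z) :
    Dset φ x y = Dset φ x z ∨ Dset φ x y = Dset φ y z ∨ Dset φ x z = Dset φ y z :=
  triple_cases (hU2 x y z hxy hxz hyz)

end Helpers
lemma dirA {V Υ : Type*} (φ : V → V → Υ) (hU2 : CondU2 φ)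
    (hrev : CondU1 (revMap φ)) : CondU1 φ := by
  intro i
  refine ⟨?_, ?_, ?_, ?_, ?_, ?_, ?_, ?_⟩
  -- D3
  · intro hc
    obtain ⟨x, y, z, hxy, hxz, hyz, e01, e02, e10, e12, e20, e21⟩ := (hasD3_iff φ i).mp hc
    rcases u2_cases hU2 hxy hxz hyz with h | h | h
    · rcases dset_eq h with ⟨ha, _⟩ | ⟨ha, _⟩
      · exact e02 (ha.symm.trans e01)
      · exact e20 (ha.symm.trans e01)
    · rcases dset_eq h with ⟨_, hb⟩ | ⟨_, hb⟩
      · exact (hrev (i, φ y x)).1 ((hasD3_iff (revMap φ) _).mpr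
          ⟨x, y, z, hxy, hxz, hyz, req e01 rfl, rne1 e02, rne1 e10,
           req e12 hb.symm, rne1 e20, rne1 e21⟩)
      · exact e10 (hb.trans e12)
    · rcases dset_eq h with ⟨ha, _⟩ | ⟨_, hb⟩
      · exact e02 (ha.trans e12)
      · exact e20 (hb.trans e12)
  -- A
  · intro hc
    obtain ⟨x, y, z, hxy, hxz, hyz, e01, e02, e10, e12, e20, e21⟩ := (hasA_iff φ i).mp hc
    rcases u2_cases hU2 hxy hxz hyz with h | h | h
    · rcases dset_eq h with ⟨ha, _⟩ | ⟨ha, _⟩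
      · exact e02 (ha.symm.trans e01)
      · exact e20 (ha.symm.trans e01)
    · rcases dset_eq h with ⟨_, hb⟩ | ⟨_, hb⟩
      · exact e10 (hb.trans e21)
      · exact e10 (hb.trans e12)
    · rcases dset_eq h with ⟨ha, _⟩ | ⟨_, hb⟩
      · exact e02 (ha.trans e12)
      · exact e20 (hb.trans e12)
  -- B
  · intro hc
    obtain ⟨x, y, z, hxy, hxz, hyz, e01, e02, e10, e12, e20, e21⟩ := (hasB_iff φ i).mp hc
    rcases u2_cases hU2 hxy hxz hyz with h | h | h
    · rcases dset_eq h with ⟨ha, _⟩ | ⟨ha, _⟩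
      · exact e02 (ha.symm.trans e01)
      · exact e20 (ha.symm.trans e01)
    · rcases dset_eq h with ⟨_, hb⟩ | ⟨ha, _⟩
      · exact e21 (hb.symm.trans e10)
      · exact e21 (ha.symm.trans e01)
    · rcases dset_eq h with ⟨ha, _⟩ | ⟨_, hb⟩
      · exact e02 (ha.trans e12)
      · exact e20 (hb.trans e12)
  -- D3c
  · intro hc
    obtain ⟨x, y, z, hxy, hxz, hyz, e01, e02, e10, e12, e20, e21⟩ := (hasD3c_iff φ i).mp hc
    rcases u2_cases hU2 hxy hxz hyz with h | h | h
    · rcases dset_eq h with ⟨ha, _⟩ | ⟨ha, _⟩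
      · exact e01 (ha.trans e02)
      · exact e01 (ha.trans e20)
    · rcases dset_eq h with ⟨ha, _⟩ | ⟨ha, _⟩
      · -- ha : φ x y = φ y z
        exact (hrev (i, φ x y)).1 ((hasD3_iff (revMap φ) _).mpr
          ⟨z, y, x, hyz.symm, hxz.symm, hxy.symm,
           req e21 ha.symm, rne2 (fun hh => e01 (hh.symm.trans e02)),
           rne1 e12, req e10 rfl,
           rne2 (fun hh => e01 (hh.symm.trans e20)), rne1 e01⟩)
      · exact e01 (ha.trans e21)
    · rcases dset_eq h with ⟨ha, _⟩ | ⟨_, hb⟩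
      · exact e12 (ha.symm.trans e02)
      · exact e12 (hb.symm.trans e20)
  -- C3
  · intro hc
    obtain ⟨x, y, z, hxy, hxz, hyz, e01, e02, e10, e12, e20, e21⟩ := (hasC3_iff φ i).mp hc
    rcases u2_cases hU2 hxy hxz hyz with h | h | h
    · rcases dset_eq h with ⟨ha, _⟩ | ⟨_, hb⟩
      · exact e02 (ha.symm.trans e01)
      · -- hb : φ y x = φ x z  (a = c)
        by_cases hbb : φ z y = φ y x
        · exact (hrev (i, φ y x)).2.2.2.2.1 ((hasC3_iff (revMap φ) _).mpr
            ⟨x, y, z, hxy, hxz, hyz, req e01 rfl, rne1 e02, rne1 e10,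
             req e12 hbb, req e20 hb.symm, rne1 e21⟩)
        · exact (hrev (i, φ y x)).1 ((hasD3_iff (revMap φ) _).mpr
            ⟨z, x, y, hxz.symm, hyz.symm, hxy,
             req e20 hb.symm, rne1 e21, rne1 e02,
             req e01 rfl, rne2 hbb, rne1 e10⟩)
    · rcases dset_eq h with ⟨_, hb⟩ | ⟨_, hb⟩
      · -- hb : φ y x = φ z y  (a = b)
        by_cases hcc : φ x z = φ y x
        · exact (hrev (i, φ y x)).2.2.2.2.1 ((hasC3_iff (revMap φ) _).mpr
            ⟨x, y, z, hxy, hxz, hyz, req e01 rfl, rne1 e02, rne1 e10,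
             req e12 hb.symm, req e20 hcc, rne1 e21⟩)
        · exact (hrev (i, φ y x)).1 ((hasD3_iff (revMap φ) _).mpr
            ⟨x, y, z, hxy, hxz, hyz, req e01 rfl, rne1 e02, rne1 e10,
             req e12 hb.symm, rne2 hcc, rne1 e21⟩)
      · exact e10 (hb.trans e12)
    · rcases dset_eq h with ⟨ha, _⟩ | ⟨ha, _⟩
      · exact e02 (ha.trans e12)
      · -- ha : φ x z = φ z y  (c = b)
        by_cases heq : φ y x = φ z y
        · exact (hrev (i, φ z y)).2.2.2.2.1 ((hasC3_iff (revMap φ) _).mpr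
            ⟨x, y, z, hxy, hxz, hyz, req e01 heq, rne1 e02, rne1 e10,
             req e12 rfl, req e20 ha, rne1 e21⟩)
        · exact (hrev (i, φ z y)).1 ((hasD3_iff (revMap φ) _).mpr
            ⟨y, z, x, hyz, hxy.symm, hxz.symm,
             req e12 rfl, rne1 e10, rne1 e21,
             req e20 ha, rne2 heq, rne1 e02⟩)
  -- Nc
  · intro hc
    obtain ⟨w, x, y, z, hwx, hwy, hwz, hxy, hxz, hyz,
      e01, e02, e03, e10, e12, e13, e20, e21, e23, e30, e31, e32⟩ := (hasNc_iff φ i).mp hc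
    have hab : φ x w = φ x y := by
      rcases u2_cases hU2 hwx hwy hxy with h | h | h
      · rcases dset_eq h with ⟨_, hb⟩ | ⟨_, hb⟩
        · exact absurd (hb.trans e20) e10
        · exact absurd (hb.trans e02) e10
      · rcases dset_eq h with ⟨ha, _⟩ | ⟨_, hb⟩
        · exact absurd (ha.symm.trans e01) e12
        · exact hb
      · rcases dset_eq h with ⟨ha, _⟩ | ⟨_, hb⟩
        · exact absurd (ha.symm.trans e02) e12
        · exact absurd (hb.symm.trans e20) e12
    have hbc : φ x y = φ z y := by
      rcases u2_cases hU2 hxy hxz hyz with h | h | h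
      · rcases dset_eq h with ⟨ha, _⟩ | ⟨ha, _⟩
        · exact absurd (ha.trans e13) e12
        · exact absurd (ha.trans e31) e12
      · rcases dset_eq h with ⟨ha, _⟩ | ⟨ha, _⟩
        · exact absurd (ha.trans e23) e12
        · exact ha
      · rcases dset_eq h with ⟨_, hb⟩ | ⟨ha, _⟩
        · exact absurd (hb.symm.trans e31) e32
        · exact absurd (ha.symm.trans e13) e32
    exact (hrev (i, φ x w)).2.2.2.2.2.2.1 ((hasN_iff (revMap φ) _).mpr
      ⟨z, y, x, w, hyz.symm, hxz.symm, hwz.symm, hxy.symm, hwy.symm, hwx.symm,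
       rne1 e32,
       rne2 (fun hh => e10 (hh.symm.trans e13)),
       rne2 (fun hh => e10 (hh.symm.trans e03)),
       req e23 (hab.trans hbc).symm,
       req e21 hab.symm,
       rne2 (fun hh => e10 (hh.symm.trans e02)),
       rne2 (fun hh => e10 (hh.symm.trans e31)),
       rne1 e12, rne1 e10,
       rne2 (fun hh => e10 (hh.symm.trans e30)),
       rne2 (fun hh => e10 (hh.symm.trans e20)),
       req e01 rfl⟩)
  -- N
  · intro hc
    obtain ⟨w, x, y, z, hwx, hwy, hwz, hxy, hxz, hyz,
      e01, e02, e03, e10, e12, e13, e20, e21, e23, e30, e31, e32⟩ := (hasN_iff φ i).mp hc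
    have hab : φ w x = φ y x := by
      rcases u2_cases hU2 hwx hwy hxy with h | h | h
      · rcases dset_eq h with ⟨_, hb⟩ | ⟨_, hb⟩
        · exact absurd (hb.symm.trans e10) e20
        · exact absurd (hb.symm.trans e10) e02
      · rcases dset_eq h with ⟨ha, _⟩ | ⟨ha, _⟩
        · exact absurd (ha.trans e12) e01
        · exact ha
      · rcases dset_eq h with ⟨ha, _⟩ | ⟨_, hb⟩
        · exact absurd (ha.trans e12) e02
        · exact absurd (hb.trans e12) e20
    have hbc : φ y x = φ y z := by
      rcases u2_cases hU2 hxy hxz hyz with h | h | h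
      · rcases dset_eq h with ⟨ha, _⟩ | ⟨ha, _⟩
        · exact absurd (ha.symm.trans e12) e13
        · exact absurd (ha.symm.trans e12) e31
      · rcases dset_eq h with ⟨ha, _⟩ | ⟨_, hb⟩
        · exact absurd (ha.symm.trans e12) e23
        · exact hb
      · rcases dset_eq h with ⟨_, hb⟩ | ⟨ha, _⟩
        · exact absurd (hb.trans e32) e31
        · exact absurd (ha.trans e32) e13
    exact (hrev (i, φ w x)).2.2.2.2.2.2.1 ((hasN_iff (revMap φ) _).mpr
      ⟨w, x, y, z, hwx, hwy, hwz, hxy, hxz, hyz,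
       rne1 e01, rne1 e02, rne1 e03,
       req e10 rfl, req e12 hab.symm, rne1 e13,
       rne1 e20, rne1 e21, rne1 e23,
       rne1 e30, rne1 e31, req e32 (hab.trans hbc).symm⟩)
  -- P4
  · intro hc
    obtain ⟨w, x, y, z, hwx, hwy, hwz, hxy, hxz, hyz,
      e01, e02, e03, e10, e12, e13, e20, e21, e23, e30, e31, e32⟩ := (hasP4_iff φ i).mp hc
    exact (hrev (i, i)).2.2.2.2.2.2.2 ((hasP4_iff (revMap φ) _).mpr
      ⟨w, x, y, z, hwx, hwy, hwz, hxy, hxz, hyz,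
       req e01 e10, rne1 e02, rne1 e03,
       req e10 e01, req e12 e21, rne1 e13,
       rne1 e20, req e21 e12, req e23 e32,
       rne1 e30, rne1 e31, req e32 e23⟩)
lemma P4aux {V Υ : Type*} {φ : V → V → Υ} {i : Υ} (hU2 : CondU2 φ) (h : CondU1 φ)
    {w x y z : V} (hwx : w ≠ x) (hwy : w ≠ y) (hwz : w ≠ z)
    (hxy : x ≠ y) (hxz : x ≠ z) (hyz : y ≠ z)
    (p01 : φ w x = i) (p10 : φ x w = i) (p12 : φ x y = i) (p21 : φ y x = i)
    (p23 : φ y z = i) (p32 : φ z y = i)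
    (c1 : ¬(φ w y = i ∧ φ y w = i)) (c2 : ¬(φ w z = i ∧ φ z w = i))
    (c3 : ¬(φ x z = i ∧ φ z x = i))
    (hkey : φ w y = i ∨ φ y w = i) : False := by
  have hkey2 : φ w z = i ∨ φ z w = i := by
    rcases u2_cases hU2 hwy hwz hyz with h' | h' | h'
    · rcases dset_eq h' with ⟨a1, a2⟩ | ⟨a1, a2⟩
      · exact hkey.elim (fun d => Or.inl (a1.symm.trans d)) (fun d => Or.inr (a2.symm.trans d))
      · exact hkey.elim (fun d => Or.inr (a1.symm.trans d)) (fun d => Or.inl (a2.symm.trans d))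
    · rcases dset_eq h' with ⟨a1, a2⟩ | ⟨a1, a2⟩
      · exact absurd ⟨a1.trans p23, a2.trans p32⟩ c1
      · exact absurd ⟨a1.trans p32, a2.trans p23⟩ c1
    · rcases dset_eq h' with ⟨a1, a2⟩ | ⟨a1, a2⟩
      · exact absurd ⟨a1.trans p23, a2.trans p32⟩ c2
      · exact absurd ⟨a1.trans p32, a2.trans p23⟩ c2
  have hkey3 : φ x z = i ∨ φ z x = i := by
    rcases u2_cases hU2 hwx hwz hxz with h' | h' | h'
    · rcases dset_eq h' with ⟨a1, a2⟩ | ⟨a1, a2⟩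
      · exact absurd ⟨a1.symm.trans p01, a2.symm.trans p10⟩ c2
      · exact absurd ⟨a2.symm.trans p10, a1.symm.trans p01⟩ c2
    · rcases dset_eq h' with ⟨a1, a2⟩ | ⟨a1, a2⟩
      · exact absurd ⟨a1.symm.trans p01, a2.symm.trans p10⟩ c3
      · exact absurd ⟨a2.symm.trans p10, a1.symm.trans p01⟩ c3
    · rcases dset_eq h' with ⟨a1, a2⟩ | ⟨a1, a2⟩
      · exact hkey2.elim (fun d => Or.inl (a1.symm.trans d)) (fun d => Or.inr (a2.symm.trans d))
      · exact hkey2.elim (fun d => Or.inr (a1.symm.trans d)) (fun d => Or.inl (a2.symm.trans d))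
  rcases hkey2 with d2 | d2 <;> rcases hkey3 with d3 | d3
  · -- d2 : φ w z = i, d3 : φ x z = i
    rcases hkey with d1 | d1
    · -- all "out": Nc on (x,z,w,y)
      exact (h i).2.2.2.2.2.1 ((hasNc_iff φ i).mpr
        ⟨x, z, w, y, hxz, hwx.symm, hxy, hwz.symm, hyz.symm, hwy,
         d3, p10, p12,
         fun hh => c3 ⟨d3, hh⟩, fun hh => c2 ⟨d2, hh⟩, p32,
         p01, d2, d1,
         p21, p23, fun hh => c1 ⟨d1, hh⟩⟩)
    · -- d1 : φ y w = i, d2 : φ w z = i : D3c on (z,w,y)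
      exact (h i).2.2.2.1 ((hasD3c_iff φ i).mpr
        ⟨z, w, y, hwz.symm, hyz.symm, hwy,
         fun hh => c2 ⟨d2, hh⟩, p32, d2,
         fun hh => c1 ⟨hh, d1⟩, p23, d1⟩)
  · -- d2 : φ w z = i, d3 : φ z x = i : D3c on (x,z,w)
    exact (h i).2.2.2.1 ((hasD3c_iff φ i).mpr
      ⟨x, z, w, hxz, hwx.symm, hwz.symm,
       fun hh => c3 ⟨hh, d3⟩, p10, d3,
       fun hh => c2 ⟨d2, hh⟩, p01, d2⟩)
  · -- d2 : φ z w = i, d3 : φ x z = i : D3c on (w,z,x)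
    exact (h i).2.2.2.1 ((hasD3c_iff φ i).mpr
      ⟨w, z, x, hwz, hwx, hxz.symm,
       fun hh => c2 ⟨hh, d2⟩, p01, d2,
       fun hh => c3 ⟨d3, hh⟩, p10, d3⟩)
  · -- d2 : φ z w = i, d3 : φ z x = i
    rcases hkey with d1 | d1
    · -- d1 : φ w y = i : D3c on (y,w,z)
      exact (h i).2.2.2.1 ((hasD3c_iff φ i).mpr
        ⟨y, w, z, hwy.symm, hyz, hwz,
         fun hh => c1 ⟨d1, hh⟩, p23, d1,
         fun hh => c2 ⟨hh, d2⟩, p32, d2⟩)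
    · -- all "in": Nc on (y,w,z,x)
      exact (h i).2.2.2.2.2.1 ((hasNc_iff φ i).mpr
        ⟨y, w, z, x, hwy.symm, hyz, hxy.symm, hwz, hwx, hxz.symm,
         d1, p23, p21,
         fun hh => c1 ⟨hh, d1⟩, fun hh => c2 ⟨hh, d2⟩, p01,
         p32, d2, d3,
         p12, p10, fun hh => c3 ⟨hh, d3⟩⟩)

lemma dirB {V Υ : Type*} (φ : V → V → Υ) (hU2 : CondU2 φ) (h : CondU1 φ) :
    CondU1 (revMap φ) := by
  rintro ⟨i, j⟩
  refine ⟨?_, ?_, ?_, ?_, ?_, ?_, ?_, ?_⟩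
  -- D3
  · intro hc
    obtain ⟨x, y, z, hxy, hxz, hyz, e01, e02, e10, e12, e20, e21⟩ :=
      (hasD3_iff (revMap φ) _).mp hc
    have f01 := rfst e01; have g01 := rsnd e01
    have f12 := rfst e12; have g12 := rsnd e12
    by_cases hij : i = j
    · exact rnd e10 (g01.trans hij.symm) (f01.trans hij)
    by_cases hp : φ x z = i
    · exact (h j).1 ((hasD3_iff φ j).mpr
        ⟨z, y, x, hyz.symm, hxz.symm, hxy.symm, g12,
         fun hh => rnd e02 hp hh, fun hh => hij (f12.symm.trans hh), g01,
         fun hh => hij (hp.symm.trans hh), fun hh => hij (f01.symm.trans hh)⟩)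
    by_cases hq : φ z x = i
    · exact (h j).1 ((hasD3_iff φ j).mpr
        ⟨z, y, x, hyz.symm, hxz.symm, hxy.symm, g12,
         fun hh => hij (hq.symm.trans hh), fun hh => hij (f12.symm.trans hh), g01,
         fun hh => rnd e20 hq hh, fun hh => hij (f01.symm.trans hh)⟩)
    · exact (h i).1 ((hasD3_iff φ i).mpr
        ⟨x, y, z, hxy, hxz, hyz, f01, hp, fun hh => hij (hh.symm.trans g01),
         f12, hq, fun hh => hij (hh.symm.trans g12)⟩)
  -- A
  · intro hc
    obtain ⟨x, y, z, hxy, hxz, hyz, e01, e02, e10, e12, e20, e21⟩ :=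
      (hasA_iff (revMap φ) _).mp hc
    have hij : i = j := (rfst e21).symm.trans (rsnd e12)
    exact rnd e10 ((rsnd e01).trans hij.symm) ((rfst e01).trans hij)
  -- B
  · intro hc
    obtain ⟨x, y, z, hxy, hxz, hyz, e01, e02, e10, e12, e20, e21⟩ :=
      (hasB_iff (revMap φ) _).mp hc
    have hij : i = j := (rfst e10).symm.trans (rsnd e01)
    exact rnd e21 ((rsnd e12).trans hij.symm) ((rfst e12).trans hij)
  -- D3c
  · intro hc
    obtain ⟨x, y, z, hxy, hxz, hyz, e01, e02, e10, e12, e20, e21⟩ :=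
      (hasD3c_iff (revMap φ) _).mp hc
    have hij : i = j := (rfst e20).symm.trans (rsnd e02)
    exact rnd e01 ((rsnd e10).trans hij.symm) ((rfst e10).trans hij)
  -- C3
  · intro hc
    obtain ⟨x, y, z, hxy, hxz, hyz, e01, e02, e10, e12, e20, e21⟩ :=
      (hasC3_iff (revMap φ) _).mp hc
    have f01 := rfst e01; have g01 := rsnd e01
    have f12 := rfst e12; have g12 := rsnd e12
    have f20 := rfst e20; have g20 := rsnd e20
    by_cases hij : i = j
    · exact rnd e10 (g01.trans hij.symm) (f01.trans hij)
    · exact (h i).2.2.2.2.1 ((hasC3_iff φ i).mpr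
        ⟨x, y, z, hxy, hxz, hyz, f01, fun hh => hij (hh.symm.trans g20),
         fun hh => hij (hh.symm.trans g01), f12, f20,
         fun hh => hij (hh.symm.trans g12)⟩)
  -- Nc
  · intro hc
    obtain ⟨w, x, y, z, hwx, hwy, hwz, hxy, hxz, hyz,
      e01, e02, e03, e10, e12, e13, e20, e21, e23, e30, e31, e32⟩ :=
      (hasNc_iff (revMap φ) _).mp hc
    have hij : i = j := (rfst e20).symm.trans (rsnd e02)
    exact rnd e10 ((rsnd e01).trans hij.symm) ((rfst e01).trans hij)
  -- N
  · intro hc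
    obtain ⟨w, x, y, z, hwx, hwy, hwz, hxy, hxz, hyz,
      e01, e02, e03, e10, e12, e13, e20, e21, e23, e30, e31, e32⟩ :=
      (hasN_iff (revMap φ) _).mp hc
    have f10 := rfst e10; have g10 := rsnd e10
    have f12 := rfst e12; have g12 := rsnd e12
    have f32 := rfst e32; have g32 := rsnd e32
    by_cases hij : i = j
    · exact rnd e01 (g10.trans hij.symm) (f10.trans hij)
    have hA : Dset φ w y = Dset φ w z := by
      rcases u2_cases hU2 hwy hwz hyz with h' | h' | h'
      · exact h'
      · rcases dset_eq h' with ⟨a1, a2⟩ | ⟨a1, a2⟩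
        · exact (rnd e20 (a2.trans f32) (a1.trans g32)).elim
        · exact (rnd e02 (a1.trans f32) (a2.trans g32)).elim
      · rcases dset_eq h' with ⟨a1, a2⟩ | ⟨a1, a2⟩
        · exact (rnd e30 (a2.trans f32) (a1.trans g32)).elim
        · exact (rnd e03 (a1.trans f32) (a2.trans g32)).elim
    have hB : Dset φ w z = Dset φ x z := by
      rcases u2_cases hU2 hwx hwz hxz with h' | h' | h'
      · rcases dset_eq h' with ⟨a1, a2⟩ | ⟨a1, a2⟩
        · exact (rnd e30 (a2.symm.trans f10) (a1.symm.trans g10)).elim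
        · exact (rnd e03 (a2.symm.trans f10) (a1.symm.trans g10)).elim
      · rcases dset_eq h' with ⟨a1, a2⟩ | ⟨a1, a2⟩
        · exact (rnd e31 (a2.symm.trans f10) (a1.symm.trans g10)).elim
        · exact (rnd e13 (a2.symm.trans f10) (a1.symm.trans g10)).elim
      · exact h'
    have hr : φ w z = φ w y ∨ φ w z = φ y w := by
      rcases dset_eq hA with ⟨a1, _⟩ | ⟨_, a2⟩
      · exact Or.inl a1.symm
      · exact Or.inr a2.symm
    have hs : φ z w = φ w y ∨ φ z w = φ y w := by
      rcases dset_eq hA with ⟨_, a2⟩ | ⟨a1, _⟩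
      · exact Or.inr a2.symm
      · exact Or.inl a1.symm
    have hAB := hA.trans hB
    have ht : φ x z = φ w y ∨ φ x z = φ y w := by
      rcases dset_eq hAB with ⟨a1, _⟩ | ⟨_, a2⟩
      · exact Or.inl a1.symm
      · exact Or.inr a2.symm
    have hu : φ z x = φ w y ∨ φ z x = φ y w := by
      rcases dset_eq hAB with ⟨_, a2⟩ | ⟨a1, _⟩
      · exact Or.inr a2.symm
      · exact Or.inl a1.symm
    by_cases hpq : φ w y = i ∨ φ y w = i
    · have np : φ w y ≠ j :=
        hpq.elim (fun hp hh => hij (hp.symm.trans hh)) (fun hq hh => rnd e20 hq hh)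
      have nq : φ y w ≠ j :=
        hpq.elim (fun hp hh => rnd e02 hp hh) (fun hq hh => hij (hq.symm.trans hh))
      have nr : φ w z ≠ j := fun hh =>
        hr.elim (fun h' => np (h'.symm.trans hh)) (fun h' => nq (h'.symm.trans hh))
      have ns : φ z w ≠ j := fun hh =>
        hs.elim (fun h' => np (h'.symm.trans hh)) (fun h' => nq (h'.symm.trans hh))
      have nt : φ x z ≠ j := fun hh =>
        ht.elim (fun h' => np (h'.symm.trans hh)) (fun h' => nq (h'.symm.trans hh))
      have nu : φ z x ≠ j := fun hh =>
        hu.elim (fun h' => np (h'.symm.trans hh)) (fun h' => nq (h'.symm.trans hh))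
      exact (h j).2.2.2.2.2.2.1 ((hasN_iff φ j).mpr
        ⟨z, y, x, w, hyz.symm, hxz.symm, hwz.symm, hxy.symm, hwy.symm, hwx.symm,
         fun hh => hij (f32.symm.trans hh), nu, ns,
         g32, g12, nq,
         nt, fun hh => hij (f12.symm.trans hh), fun hh => hij (f10.symm.trans hh),
         nr, np, g10⟩)
    · push_neg at hpq
      obtain ⟨hp, hq⟩ := hpq
      have nr : φ w z ≠ i := fun hh =>
        hr.elim (fun h' => hp (h'.symm.trans hh)) (fun h' => hq (h'.symm.trans hh))
      have ns : φ z w ≠ i := fun hh =>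
        hs.elim (fun h' => hp (h'.symm.trans hh)) (fun h' => hq (h'.symm.trans hh))
      have nt : φ x z ≠ i := fun hh =>
        ht.elim (fun h' => hp (h'.symm.trans hh)) (fun h' => hq (h'.symm.trans hh))
      have nu : φ z x ≠ i := fun hh =>
        hu.elim (fun h' => hp (h'.symm.trans hh)) (fun h' => hq (h'.symm.trans hh))
      exact (h i).2.2.2.2.2.2.1 ((hasN_iff φ i).mpr
        ⟨w, x, y, z, hwx, hwy, hwz, hxy, hxz, hyz,
         fun hh => hij (hh.symm.trans g10), hp, nr,
         f10, f12, nt,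
         hq, fun hh => hij (hh.symm.trans g12), fun hh => hij (hh.symm.trans g32),
         ns, nu, f32⟩)
  -- P4
  · intro hc
    obtain ⟨w, x, y, z, hwx, hwy, hwz, hxy, hxz, hyz,
      e01, e02, e03, e10, e12, e13, e20, e21, e23, e30, e31, e32⟩ :=
      (hasP4_iff (revMap φ) _).mp hc
    have hij : i = j := (rfst e10).symm.trans (rsnd e01)
    subst hij
    have p01 := rfst e01; have p10 := rfst e10; have p12 := rfst e12
    have p21 := rfst e21; have p23 := rfst e23; have p32 := rfst e32
    have c1 : ¬(φ w y = i ∧ φ y w = i) := fun hh => rnd e02 hh.1 hh.2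
    have c2 : ¬(φ w z = i ∧ φ z w = i) := fun hh => rnd e03 hh.1 hh.2
    have c3 : ¬(φ x z = i ∧ φ z x = i) := fun hh => rnd e13 hh.1 hh.2
    by_cases h1 : φ w y = i ∨ φ y w = i
    · exact P4aux hU2 h hwx hwy hwz hxy hxz hyz p01 p10 p12 p21 p23 p32 c1 c2 c3 h1
    by_cases h3 : φ x z = i ∨ φ z x = i
    · exact P4aux hU2 h hyz.symm hxz.symm hwz.symm hxy.symm hwy.symm hwx.symm
        p32 p23 p21 p12 p10 p01
        (fun hh => c3 ⟨hh.2, hh.1⟩) (fun hh => c2 ⟨hh.2, hh.1⟩)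
        (fun hh => c1 ⟨hh.2, hh.1⟩) h3.symm
    by_cases h2 : φ w z = i ∨ φ z w = i
    · push_neg at h1
      rcases u2_cases hU2 hwy hwz hyz with h' | h' | h'
      · rcases dset_eq h' with ⟨a1, a2⟩ | ⟨a1, a2⟩
        · exact h2.elim (fun d => h1.1 (a1.trans d)) (fun d => h1.2 (a2.trans d))
        · exact h2.elim (fun d => h1.2 (a2.trans d)) (fun d => h1.1 (a1.trans d))
      · rcases dset_eq h' with ⟨a1, a2⟩ | ⟨a1, a2⟩
        · exact c1 ⟨a1.trans p23, a2.trans p32⟩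
        · exact c1 ⟨a1.trans p32, a2.trans p23⟩
      · rcases dset_eq h' with ⟨a1, a2⟩ | ⟨a1, a2⟩
        · exact c2 ⟨a1.trans p23, a2.trans p32⟩
        · exact c2 ⟨a1.trans p32, a2.trans p23⟩
    · push_neg at h1; push_neg at h2; push_neg at h3
      exact (h i).2.2.2.2.2.2.2 ((hasP4_iff φ i).mpr
        ⟨w, x, y, z, hwx, hwy, hwz, hxy, hxz, hyz,
         p01, h1.1, h2.1, p10, p12, h3.1, h1.2, p21, p23, h2.2, h3.2, p32⟩)

end AuxProofs

/-- Lemma: assuming (U2), the monochromatic digraphs of `g` are all di-cographs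
iff the monochromatic digraphs of `rev(g)` are all di-cographs. -/
theorem condU1_iff_rev {V Υ : Type*} (φ : V → V → Υ) (hU2 : CondU2 φ) :
    CondU1 φ ↔ CondU1 (revMap φ) := by
  exact ⟨fun h => dirB φ hU2 h, fun h => dirA φ hU2 h⟩
end
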